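/- arXiv:2205.08910 — 2 statements merged into one kernel-verified Lean document; each statement's English description precedes it below -/
import Mathlib

section
/- Divergence single-letterization chain: D(P_{M̃_k Ỹ_kⁿ} ‖ Q_{M̃_k} × P_{Ỹ_kⁿ}) ≤ ∑_{ℓ=1}^{k} I(M̃_ℓ; Ỹ_ℓⁿ) ≤ n·∑_{ℓ=1}^{k} I(U_ℓ; Ỹ_ℓ), where U_ℓ := (M̃_ℓ, Ỹ₀^{T−1},…,Ỹ_k^{T−1}, T) and Ỹ_ℓ := Ỹ_{ℓ,T}. -/
open Filter

noncomputable section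

/-- `p` is a probability mass function on the finite alphabet `α`. -/
def IsPMF {α : Type*} [Fintype α] (p : α → ℝ) : Prop :=
  (∀ a, 0 ≤ p a) ∧ ∑ a, p a = 1

open Classical in
/-- Probability that the random variable `X` takes the value `a`, under the pmf `p`. -/
def probEq {Ω α : Type*} [Fintype Ω] (p : Ω → ℝ) (X : Ω → α) (a : α) : ℝ :=
  ∑ ω, if X ω = a then p ω else 0

/-- Shannon entropy (base 2) of the random variable `X` under the pmf `p`. -/
def entOf {Ω α : Type*} [Fintype Ω] (p : Ω → ℝ) (X : Ω → α) : ℝ :=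
  -∑ ω, p ω * Real.logb 2 (probEq p X (X ω))

/-- Conditional Shannon entropy `H(X | Y)` under the pmf `p`. -/
def condEntOf {Ω α β : Type*} [Fintype Ω] (p : Ω → ℝ) (X : Ω → α) (Y : Ω → β) : ℝ :=
  entOf p (fun ω => (X ω, Y ω)) - entOf p Y

/-- Mutual information `I(X ; Y)` under the pmf `p`. -/
def miOf {Ω α β : Type*} [Fintype Ω] (p : Ω → ℝ) (X : Ω → α) (Y : Ω → β) : ℝ :=
  entOf p X + entOf p Y - entOf p (fun ω => (X ω, Y ω))

/-- Conditional mutual information `I(X ; Y | Z)` under the pmf `p`. -/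
def condMIOf {Ω α β γ : Type*} [Fintype Ω] (p : Ω → ℝ) (X : Ω → α) (Y : Ω → β)
    (Z : Ω → γ) : ℝ :=
  condEntOf p X Z + condEntOf p Y Z - condEntOf p (fun ω => (X ω, Y ω)) Z

open Classical in
/-- Probability of the set `S` under the pmf `p`. -/
def probSet {Ω : Type*} [Fintype Ω] (p : Ω → ℝ) (S : Set Ω) : ℝ :=
  ∑ ω, if ω ∈ S then p ω else 0

open Classical in
/-- Number of occurrences of the symbol `a` in the sequence `w`. -/
def Ncount {W : Type*} {n : ℕ} (w : Fin n → W) (a : W) : ℕ :=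
  (Finset.univ.filter (fun i => w i = a)).card

/-- The strongly typical set `T_μ⁽ⁿ⁾(P)`. -/
def typicalSet {W : Type*} [Fintype W] (P : W → ℝ) (μ : ℝ) (n : ℕ) : Set (Fin n → W) :=
  {w | ∀ a, |((Ncount w a : ℝ)) / n - P a| ≤ μ ∧ (P a = 0 → Ncount w a = 0)}

/-- The typicality parameter `μ_n = n^{-1/3}`. -/
def μseq (n : ℕ) : ℝ := (n : ℝ) ^ (-(1/3 : ℝ))

section KHop

variable (k : ℕ) (Y : ℕ → Type) [∀ i, Fintype (Y i)] [∀ i, Nonempty (Y i)]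

/-- The index `j` viewed as an element of `Fin (k+1)`. -/
def idxLo (j : Fin k) : Fin (k + 1) := ⟨(j : ℕ), Nat.lt_succ_of_lt j.isLt⟩

/-- The index `j+1` viewed as an element of `Fin (k+1)`. -/
def idxHi (j : Fin k) : Fin (k + 1) := ⟨(j : ℕ) + 1, Nat.succ_lt_succ j.isLt⟩

variable (P : (∀ i : Fin (k + 1), Y i) → ℝ)

/-- The i.i.d. law of the source tuple `(Y₀ⁿ,…,Y_kⁿ)` under hypothesis `H = 0`. -/
def iidK (n : ℕ) (ys : ∀ i : Fin (k + 1), Fin n → Y i) : ℝ :=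
  ∏ t : Fin n, P (fun i => ys i t)

open Classical in
/-- The marginal pmf of `Y_i` under `P`. -/
def margK (i : Fin (k + 1)) (c : Y i) : ℝ :=
  ∑ y : ∀ i : Fin (k + 1), Y i, if y i = c then P y else 0

/-- The product of the marginals `P_{Y₀}·P_{Y₁}⋯P_{Y_k}`. -/
def prodMargK (y : ∀ i : Fin (k + 1), Y i) : ℝ := ∏ i, margK k Y P i (y i)

/-- The i.i.d. law of the source tuple under hypothesis `H = 1` (product of marginals). -/
def iidQK (n : ℕ) (ys : ∀ i : Fin (k + 1), Fin n → Y i) : ℝ :=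
  ∏ t : Fin n, prodMargK k Y P (fun i => ys i t)

open Classical in
/-- The pairwise marginal `P_{Y_j Y_{j+1}}` of `P`. -/
def pairMargK (j : Fin k) (a : Y (j : ℕ)) (b : Y ((j : ℕ) + 1)) : ℝ :=
  ∑ y : ∀ i : Fin (k + 1), Y i, if y (idxLo k j) = a ∧ y (idxHi k j) = b then P y else 0

open Classical in
/-- `P` forms the Markov chain `Y₀ → Y₁ → ⋯ → Y_k`. -/
def IsMarkovChainK : Prop :=
  ∀ y : ∀ i : Fin (k + 1), Y i,
    P y * ∏ i ∈ Finset.univ.filter (fun i : Fin (k + 1) => 0 < (i : ℕ) ∧ (i : ℕ) < k),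
        margK k Y P i (y i)
      = ∏ j : Fin k, pairMargK k Y P j (y (idxLo k j)) (y (idxHi k j))

/-- Extension of a source tuple to all natural indices (junk beyond `k`). -/
def extendTup (n : ℕ) (ys : ∀ i : Fin (k + 1), Fin n → Y i) (ℓ : ℕ) : Fin n → Y ℓ :=
  if h : ℓ < k + 1 then ys ⟨ℓ, h⟩ else fun _ => Classical.arbitrary (Y ℓ)

/-- The messages computed recursively from the encoders:
`msgRec φ ys' ℓ` is the message `M_{ℓ+1}`. -/
def msgRec (n : ℕ) (φ : ∀ ℓ : ℕ, (Fin n → Y ℓ) → ℕ → ℕ)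
    (ys' : ∀ ℓ : ℕ, Fin n → Y ℓ) : ℕ → ℕ
  | 0 => φ 0 (ys' 0) 0
  | (ℓ + 1) => φ (ℓ + 1) (ys' (ℓ + 1)) (msgRec n φ ys' ℓ)

/-- A source tuple viewed as one sequence over the product alphabet. -/
def tupleSeq {n : ℕ} (ys : ∀ i : Fin (k + 1), Fin n → Y i) :
    Fin n → (∀ i : Fin (k + 1), Y i) :=
  fun t i => ys i t

/-- The acceptance region `A_k` of the decision center `R_k`: the tuples on which the
guess is `Ĥ_k = 0` (decision `false`). -/
def acceptSet (n : ℕ) (φ : ∀ ℓ : ℕ, (Fin n → Y ℓ) → ℕ → ℕ)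
    (g : (Fin n → Y k) → ℕ → Bool) : Set (∀ i : Fin (k + 1), Fin n → Y i) :=
  {ys | g (extendTup k Y n ys k) (msgRec Y n φ (extendTup k Y n ys) (k - 1)) = false}

/-- The set `D_k`: the acceptance region intersected with the strongly typical set. -/
def DsetCM (n : ℕ) (φ : ∀ ℓ : ℕ, (Fin n → Y ℓ) → ℕ → ℕ)
    (g : (Fin n → Y k) → ℕ → Bool) : Set (∀ i : Fin (k + 1), Fin n → Y i) :=
  acceptSet k Y n φ g ∩ {ys | tupleSeq k Y ys ∈ typicalSet P (μseq n) n}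

/-- `Δ_k = Pr[(Y₀ⁿ,…,Y_kⁿ) ∈ D_k]` under `H = 0`. -/
def DeltaCM (n : ℕ) (φ : ∀ ℓ : ℕ, (Fin n → Y ℓ) → ℕ → ℕ)
    (g : (Fin n → Y k) → ℕ → Bool) : ℝ :=
  probSet (iidK k Y P n) (DsetCM k Y P n φ g)

open Classical in
/-- The change-of-measure pmf of `(Ỹ₀ⁿ,…,Ỹ_kⁿ)`: the `H = 0` law conditioned on `D_k`. -/
def ptildeCM (n : ℕ) (φ : ∀ ℓ : ℕ, (Fin n → Y ℓ) → ℕ → ℕ)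
    (g : (Fin n → Y k) → ℕ → Bool) (ys : ∀ i : Fin (k + 1), Fin n → Y i) : ℝ :=
  if ys ∈ DsetCM k Y P n φ g then iidK k Y P n ys / DeltaCM k Y P n φ g else 0

/-- The pmf of `((Ỹ₀ⁿ,…,Ỹ_kⁿ), T)` with `T` uniform on `{1,…,n}` independent of the rest. -/
def pfullCM (n : ℕ) (φ : ∀ ℓ : ℕ, (Fin n → Y ℓ) → ℕ → ℕ)
    (g : (Fin n → Y k) → ℕ → Bool)
    (ω : (∀ i : Fin (k + 1), Fin n → Y i) × Fin n) : ℝ :=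
  ptildeCM k Y P n φ g ω.1 / n

/-- The random variable `M̃_{j+1}` (the message of hop `j+1` applied to the tilde sources). -/
def MtilRV (n : ℕ) (φ : ∀ ℓ : ℕ, (Fin n → Y ℓ) → ℕ → ℕ) (j : ℕ)
    (ω : (∀ i : Fin (k + 1), Fin n → Y i) × Fin n) : ℕ :=
  msgRec Y n φ (extendTup k Y n ω.1) j

open Classical in
/-- The prefixes `(Ỹ₀^{T−1},…,Ỹ_k^{T−1})` as a random variable. -/
def prefixAll (n : ℕ) (ω : (∀ i : Fin (k + 1), Fin n → Y i) × Fin n) :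
    ∀ i : Fin (k + 1), Fin n → Option (Y i) :=
  fun i t => if (t : ℕ) < (ω.2 : ℕ) then some (ω.1 i t) else none

/-- The auxiliary random variable `U_{j+1} := (M̃_{j+1}, Ỹ₀^{T−1},…,Ỹ_k^{T−1}, T)`. -/
def UvarCM (n : ℕ) (φ : ∀ ℓ : ℕ, (Fin n → Y ℓ) → ℕ → ℕ) (j : ℕ)
    (ω : (∀ i : Fin (k + 1), Fin n → Y i) × Fin n) :
    ℕ × (∀ i : Fin (k + 1), Fin n → Option (Y i)) × Fin n :=
  (MtilRV k Y n φ j ω, prefixAll k Y n ω, ω.2)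

/-- The type-I error probability `α_{k,n} = Pr[Ĥ_k = 1 | H = 0]`. -/
def alphaCM (n : ℕ) (φ : ∀ ℓ : ℕ, (Fin n → Y ℓ) → ℕ → ℕ)
    (g : (Fin n → Y k) → ℕ → Bool) : ℝ :=
  probSet (iidK k Y P n) ((acceptSet k Y n φ g)ᶜ)

/-- The type-II error probability `β_{k,n} = Pr[Ĥ_k = 0 | H = 1]`. -/
def betaCM (n : ℕ) (φ : ∀ ℓ : ℕ, (Fin n → Y ℓ) → ℕ → ℕ)
    (g : (Fin n → Y k) → ℕ → Bool) : ℝ :=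
  probSet (iidQK k Y P n) (acceptSet k Y n φ g)

end KHop

section KHopQ

variable (k : ℕ) (Y : ℕ → Type) [∀ i, Fintype (Y i)] [∀ i, Nonempty (Y i)]
variable (P : (∀ i : Fin (k + 1), Y i) → ℝ)

/-- Extension of a partial source tuple `(y₀ⁿ,…,y_{k−1}ⁿ)` to all natural indices. -/
def partialExt (n : ℕ) (pys : ∀ j : Fin k, Fin n → Y (j : ℕ)) (ℓ : ℕ) : Fin n → Y ℓ :=
  if h : ℓ < k then pys ⟨ℓ, h⟩ else fun _ => Classical.arbitrary (Y ℓ)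

/-- The marginal law of the tilde sequence `Ỹ_iⁿ` (component `i` of the tilde tuple). -/
def margSeqT (n : ℕ) (φ : ∀ ℓ : ℕ, (Fin n → Y ℓ) → ℕ → ℕ)
    (g : (Fin n → Y k) → ℕ → Bool) (i : Fin (k + 1)) (s : Fin n → Y i) : ℝ :=
  probEq (ptildeCM k Y P n φ g) (fun ys => ys i) s

open Classical in
/-- `Q_{M̃_k}`: the pmf of the message `m_k` obtained by applying the encoders to
independent inputs with the marginal distributions `P_{Ỹ₀ⁿ},…,P_{Ỹ_{k−1}ⁿ}`. -/
def QmsgCM (n : ℕ) (φ : ∀ ℓ : ℕ, (Fin n → Y ℓ) → ℕ → ℕ)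
    (g : (Fin n → Y k) → ℕ → Bool) (m : ℕ) : ℝ :=
  ∑ pys : ∀ j : Fin k, Fin n → Y (j : ℕ),
    (∏ j : Fin k, margSeqT k Y P n φ g (idxLo k j) (pys j)) *
      (if msgRec Y n φ (partialExt k Y n pys) (k - 1) = m then 1 else 0)

open Classical in
/-- `(Q_{M̃_k} × P_{Ỹ_kⁿ})(A_k)`: the probability under the product of `Q_{M̃_k}` and the
tilde marginal of `Ỹ_kⁿ` of the acceptance event `g_k(m_k, y_kⁿ) = 0`. -/
def QPaccCM (n : ℕ) (φ : ∀ ℓ : ℕ, (Fin n → Y ℓ) → ℕ → ℕ)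
    (g : (Fin n → Y k) → ℕ → Bool) : ℝ :=
  ∑ pys : ∀ j : Fin k, Fin n → Y (j : ℕ), ∑ yk : Fin n → Y k,
    (∏ j : Fin k, margSeqT k Y P n φ g (idxLo k j) (pys j)) *
      margSeqT k Y P n φ g (Fin.last k) yk *
      (if g yk (msgRec Y n φ (partialExt k Y n pys) (k - 1)) = false then 1 else 0)

/-- The pair `(M̃_k, Ỹ_kⁿ)` as a random variable of the tilde source tuple. -/
def MYpairCM (n : ℕ) (φ : ∀ ℓ : ℕ, (Fin n → Y ℓ) → ℕ → ℕ)
    (ys : ∀ i : Fin (k + 1), Fin n → Y i) : ℕ × (Fin n → Y k) :=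
  (msgRec Y n φ (extendTup k Y n ys) (k - 1), extendTup k Y n ys k)

/-- The KL divergence `D(P_{M̃_k Ỹ_kⁿ} ‖ Q_{M̃_k} × P_{Ỹ_kⁿ})`. -/
def klJointCM (n : ℕ) (φ : ∀ ℓ : ℕ, (Fin n → Y ℓ) → ℕ → ℕ)
    (g : (Fin n → Y k) → ℕ → Bool) : ℝ :=
  ∑ ys : ∀ i : Fin (k + 1), Fin n → Y i,
    ptildeCM k Y P n φ g ys *
      Real.logb 2
        (probEq (ptildeCM k Y P n φ g) (MYpairCM k Y n φ) (MYpairCM k Y n φ ys)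
          / (QmsgCM k Y P n φ g (MYpairCM k Y n φ ys).1 *
              margSeqT k Y P n φ g (Fin.last k) (MYpairCM k Y n φ ys).2))

end KHopQ

section AuxPMF

variable {Ω : Type*} [Fintype Ω] {α β γ δ : Type*}

lemma probEq_nonneg (p : Ω → ℝ) (hp : ∀ ω, 0 ≤ p ω) (X : Ω → α) (a : α) :
    0 ≤ probEq p X a := by
  classical
  refine Finset.sum_nonneg fun ω _ => ?_
  split <;> simp [hp ω]

lemma le_probEq (p : Ω → ℝ) (hp : ∀ ω, 0 ≤ p ω) (X : Ω → α) (ω : Ω) :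
    p ω ≤ probEq p X (X ω) := by
  classical
  have h := Finset.single_le_sum (f := fun ω' => if X ω' = X ω then p ω' else 0)
      (fun ω' _ => by split <;> simp [hp ω']) (Finset.mem_univ ω)
  simpa [probEq] using h

lemma sum_probEq_le (p : Ω → ℝ) (hp : ∀ ω, 0 ≤ p ω) (X : Ω → α) (f : α → β)
    (S : Finset α) (b : β) (hS : ∀ a ∈ S, f a = b) :
    ∑ a ∈ S, probEq p X a ≤ probEq p (fun ω => f (X ω)) b := by
  classical
  unfold probEq
  rw [Finset.sum_comm]
  refine Finset.sum_le_sum fun ω _ => ?_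
  by_cases h : X ω ∈ S
  · have h1 : ∑ a ∈ S, (if X ω = a then p ω else 0) = p ω := by
      rw [Finset.sum_eq_single_of_mem (X ω) h (fun a _ hne => if_neg (fun h' => hne h'.symm)),
        if_pos rfl]
    rw [h1, if_pos (hS _ h)]
  · have h1 : ∑ a ∈ S, (if X ω = a then p ω else 0) = 0 :=
      Finset.sum_eq_zero fun a ha => by
        rw [if_neg]; rintro rfl; exact h ha
    rw [h1]; split <;> simp [hp ω]

lemma probEq_le_comp (p : Ω → ℝ) (hp : ∀ ω, 0 ≤ p ω) (X : Ω → α) (f : α → β) (a : α) :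
    probEq p X a ≤ probEq p (fun ω => f (X ω)) (f a) := by
  classical
  have h := sum_probEq_le p hp X f {a} (f a) (by simp)
  simpa using h

lemma probEq_const (p : Ω → ℝ) (hp1 : ∑ ω, p ω = 1) (c : α) :
    probEq p (fun _ => c) c = 1 := by
  classical
  unfold probEq; simpa using hp1

lemma sum_probEq_le_one (p : Ω → ℝ) (hp : ∀ ω, 0 ≤ p ω) (hp1 : ∑ ω, p ω = 1)
    (X : Ω → α) (S : Finset α) :
    ∑ a ∈ S, probEq p X a ≤ 1 := by
  classical
  have h := sum_probEq_le p hp X (fun _ => ()) S () (fun _ _ => rfl)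
  have h2 : probEq p (fun ω => ()) () = 1 := by unfold probEq; simpa using hp1
  calc ∑ a ∈ S, probEq p X a ≤ probEq p (fun ω => ()) () := h
    _ = 1 := h2

lemma sum_mul_comp [DecidableEq α] (p : Ω → ℝ) (X : Ω → α) (f : α → ℝ) :
    ∑ ω, p ω * f (X ω) = ∑ a ∈ Finset.image X Finset.univ, probEq p X a * f a := by
  classical
  rw [← Finset.sum_fiberwise_of_maps_to (g := X)
    (fun ω _ => Finset.mem_image_of_mem X (Finset.mem_univ ω)) (fun ω => p ω * f (X ω))]
  refine Finset.sum_congr rfl fun a ha => ?_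
  have h1 : ∑ ω ∈ Finset.univ.filter fun ω => X ω = a, p ω * f (X ω)
      = (∑ ω ∈ Finset.univ.filter fun ω => X ω = a, p ω) * f a := by
    rw [Finset.sum_mul]
    refine Finset.sum_congr rfl fun ω hω => ?_
    rw [(Finset.mem_filter.1 hω).2]
  rw [h1]
  have h2 : probEq p X a = ∑ ω ∈ Finset.univ.filter (fun ω => X ω = a), p ω := by
    unfold probEq
    rw [Finset.sum_filter]
    refine Finset.sum_congr rfl fun ω _ => ?_
    by_cases h : X ω = a <;> simp [h]
  rw [h2]

lemma key_log_le (p r : Ω → ℝ) (hp0 : ∀ ω, 0 ≤ p ω) (hp1 : ∑ ω, p ω = 1)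
    (hr : ∀ ω, p ω ≠ 0 → 0 < r ω)
    (hsum : ∑ ω, p ω * r ω ≤ 1) :
    ∑ ω, p ω * Real.logb 2 (r ω) ≤ 0 := by
  classical
  have h2 : (0:ℝ) < Real.log 2 := Real.log_pos (by norm_num)
  have hterm : ∀ ω, p ω * Real.logb 2 (r ω) ≤ (p ω * r ω - p ω) / Real.log 2 := by
    intro ω
    by_cases h : p ω = 0
    · simp [h]
    · have hp' : 0 < p ω := lt_of_le_of_ne (hp0 ω) (Ne.symm h)
      have hlog := Real.log_le_sub_one_of_pos (hr ω h)
      have h3 : p ω * Real.log (r ω) ≤ p ω * r ω - p ω := by nlinarith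
      calc p ω * Real.logb 2 (r ω) = (p ω * Real.log (r ω)) / Real.log 2 := by
            rw [Real.logb]; ring
        _ ≤ (p ω * r ω - p ω) / Real.log 2 := (div_le_div_iff_of_pos_right h2).mpr h3
  calc ∑ ω, p ω * Real.logb 2 (r ω) ≤ ∑ ω, (p ω * r ω - p ω) / Real.log 2 :=
        Finset.sum_le_sum fun ω _ => hterm ω
    _ = ((∑ ω, p ω * r ω) - 1) / Real.log 2 := by
        rw [← Finset.sum_div, Finset.sum_sub_distrib, hp1]
    _ ≤ 0 := div_nonpos_of_nonpos_of_nonneg (by linarith) h2.le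

lemma sum_mul_congr_support (p f g : Ω → ℝ) (h : ∀ ω, p ω ≠ 0 → f ω = g ω) :
    ∑ ω, p ω * f ω = ∑ ω, p ω * g ω :=
  Finset.sum_congr rfl fun ω _ => by
    by_cases hp : p ω = 0
    · simp [hp]
    · rw [h ω hp]

lemma probEq_congr_fib (p : Ω → ℝ) (X : Ω → α) (X' : Ω → β)
    (h : ∀ ω ω', X ω = X ω' ↔ X' ω = X' ω') (ω : Ω) :
    probEq p X (X ω) = probEq p X' (X' ω) := by
  classical
  unfold probEq
  refine Finset.sum_congr rfl fun ω' _ => ?_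
  by_cases hx : X ω' = X ω
  · rw [if_pos hx, if_pos ((h ω' ω).1 hx)]
  · rw [if_neg hx, if_neg fun hc => hx ((h ω' ω).2 hc)]

lemma ent_congr (p : Ω → ℝ) (X : Ω → α) (X' : Ω → β)
    (h : ∀ ω ω', X ω = X ω' ↔ X' ω = X' ω') :
    entOf p X = entOf p X' := by
  classical
  unfold entOf
  congr 1
  exact Finset.sum_congr rfl fun ω _ => by rw [probEq_congr_fib p X X' h ω]

end AuxPMF


section AuxMI

variable {Ω : Type*} [Fintype Ω] {α β γ δ : Type*}

lemma mi_congr_left (p : Ω → ℝ) (X : Ω → α) (X' : Ω → β) (B : Ω → γ)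
    (h : ∀ ω ω', X ω = X ω' ↔ X' ω = X' ω') :
    miOf p X B = miOf p X' B := by
  unfold miOf
  rw [ent_congr p X X' h, ent_congr p (fun ω => (X ω, B ω)) (fun ω => (X' ω, B ω))
    (fun ω ω' => by
      simp only [Prod.mk.injEq]
      exact ⟨fun ⟨h1, h2⟩ => ⟨(h ω ω').1 h1, h2⟩, fun ⟨h1, h2⟩ => ⟨(h ω ω').2 h1, h2⟩⟩)]

lemma mi_congr_right (p : Ω → ℝ) (X : Ω → α) (B : Ω → β) (B' : Ω → γ)
    (h : ∀ ω ω', B ω = B ω' ↔ B' ω = B' ω') :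
    miOf p X B = miOf p X B' := by
  unfold miOf
  rw [ent_congr p B B' h, ent_congr p (fun ω => (X ω, B ω)) (fun ω => (X ω, B' ω))
    (fun ω ω' => by
      simp only [Prod.mk.injEq]
      exact ⟨fun ⟨h1, h2⟩ => ⟨h1, (h ω ω').1 h2⟩, fun ⟨h1, h2⟩ => ⟨h1, (h ω ω').2 h2⟩⟩)]

lemma mi_symm (p : Ω → ℝ) (X : Ω → α) (Y : Ω → β) : miOf p X Y = miOf p Y X := by
  unfold miOf
  rw [ent_congr p (fun ω => (X ω, Y ω)) (fun ω => (Y ω, X ω))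
    (fun ω ω' => by simp only [Prod.mk.injEq]; exact and_comm)]
  ring

lemma condMI_symm (p : Ω → ℝ) (X : Ω → α) (Y : Ω → β) (Z : Ω → γ) :
    condMIOf p X Y Z = condMIOf p Y X Z := by
  simp only [condMIOf, condEntOf]
  rw [ent_congr p (fun ω => ((X ω, Y ω), Z ω)) (fun ω => ((Y ω, X ω), Z ω))
    (fun ω ω' => by simp only [Prod.mk.injEq]; tauto)]
  ring

lemma mi_pair_left (p : Ω → ℝ) (A : Ω → α) (C : Ω → γ) (B : Ω → β) :
    miOf p (fun ω => (A ω, C ω)) B = miOf p C B + condMIOf p A B C := by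
  simp only [miOf, condMIOf, condEntOf]
  rw [ent_congr p (fun ω => (C ω, B ω)) (fun ω => (B ω, C ω))
      (fun ω ω' => by simp only [Prod.mk.injEq]; exact and_comm),
    ent_congr p (fun ω => ((A ω, B ω), C ω)) (fun ω => ((A ω, C ω), B ω))
      (fun ω ω' => by simp only [Prod.mk.injEq]; tauto)]
  ring

lemma mi_pair_right (p : Ω → ℝ) (A : Ω → α) (B : Ω → β) (C : Ω → γ) :
    miOf p A (fun ω => (B ω, C ω)) = miOf p A C + condMIOf p A B C := by
  rw [mi_symm, mi_pair_left, mi_symm, condMI_symm]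

lemma ent_const (p : Ω → ℝ) (hp1 : ∑ ω, p ω = 1) (c : α) : entOf p (fun _ => c) = 0 := by
  simp only [entOf]
  rw [show probEq p (fun _ : Ω => c) c = 1 from probEq_const p hp1 c]
  simp

lemma mi_const_right (p : Ω → ℝ) (hp1 : ∑ ω, p ω = 1) (A : Ω → α) (c : β) :
    miOf p A (fun _ => c) = 0 := by
  unfold miOf
  rw [ent_const p hp1 c, ent_congr p (fun ω => (A ω, c)) A
    (fun ω ω' => by simp [Prod.mk.injEq])]
  ring

private lemma mul_div_cancel_aux (a b c d : ℝ) (ha : a ≠ 0) :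
    a * (b * c / (a * d)) = b * c * d⁻¹ := by
  rw [div_eq_mul_inv, mul_inv]
  calc a * (b * c * (a⁻¹ * d⁻¹)) = (a * a⁻¹) * (b * c * d⁻¹) := by ring
    _ = b * c * d⁻¹ := by rw [mul_inv_cancel₀ ha, one_mul]

lemma condMI_nonneg (p : Ω → ℝ) (hp0 : ∀ ω, 0 ≤ p ω) (hp1 : ∑ ω, p ω = 1)
    (X : Ω → α) (Y : Ω → β) (Z : Ω → γ) : 0 ≤ condMIOf p X Y Z := by
  classical
  have hposXZ : ∀ ω, p ω ≠ 0 → 0 < probEq p (fun ω' => (X ω', Z ω')) (X ω, Z ω) := fun ω h =>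
    lt_of_lt_of_le (lt_of_le_of_ne (hp0 ω) (Ne.symm h)) (le_probEq p hp0 _ ω)
  have hposYZ : ∀ ω, p ω ≠ 0 → 0 < probEq p (fun ω' => (Y ω', Z ω')) (Y ω, Z ω) := fun ω h =>
    lt_of_lt_of_le (lt_of_le_of_ne (hp0 ω) (Ne.symm h)) (le_probEq p hp0 _ ω)
  have hposW : ∀ ω, p ω ≠ 0 → 0 < probEq p (fun ω' => ((X ω', Y ω'), Z ω')) ((X ω, Y ω), Z ω) :=
    fun ω h => lt_of_lt_of_le (lt_of_le_of_ne (hp0 ω) (Ne.symm h)) (le_probEq p hp0 _ ω)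
  have hposZ : ∀ ω, p ω ≠ 0 → 0 < probEq p Z (Z ω) := fun ω h =>
    lt_of_lt_of_le (lt_of_le_of_ne (hp0 ω) (Ne.symm h)) (le_probEq p hp0 Z ω)
  have hr : ∀ ω, p ω ≠ 0 → 0 <
      probEq p (fun ω' => (X ω', Z ω')) (X ω, Z ω) * probEq p (fun ω' => (Y ω', Z ω')) (Y ω, Z ω)
        / (probEq p (fun ω' => ((X ω', Y ω'), Z ω')) ((X ω, Y ω), Z ω) * probEq p Z (Z ω)) :=
    fun ω h => div_pos (mul_pos (hposXZ ω h) (hposYZ ω h)) (mul_pos (hposW ω h) (hposZ ω h))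
  have hexp : condMIOf p X Y Z = -∑ ω, p ω * Real.logb 2
      (probEq p (fun ω' => (X ω', Z ω')) (X ω, Z ω) * probEq p (fun ω' => (Y ω', Z ω')) (Y ω, Z ω)
        / (probEq p (fun ω' => ((X ω', Y ω'), Z ω')) ((X ω, Y ω), Z ω) * probEq p Z (Z ω))) := by
    simp only [condMIOf, condEntOf, entOf]
    have e1 : ∀ (c₁ c₂ c₃ c₄ : Ω → ℝ),
        ((-∑ ω, p ω * c₁ ω) - -∑ ω, p ω * c₄ ω) + ((-∑ ω, p ω * c₂ ω) - -∑ ω, p ω * c₄ ω)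
          - ((-∑ ω, p ω * c₃ ω) - -∑ ω, p ω * c₄ ω)
          = -∑ ω, p ω * (c₁ ω + c₂ ω - c₃ ω - c₄ ω) := by
      intro c₁ c₂ c₃ c₄
      rw [show (fun ω => p ω * (c₁ ω + c₂ ω - c₃ ω - c₄ ω))
          = fun ω => p ω * c₁ ω + p ω * c₂ ω - p ω * c₃ ω - p ω * c₄ ω from
        funext fun ω => by ring]
      rw [Finset.sum_sub_distrib, Finset.sum_sub_distrib, Finset.sum_add_distrib]
      ring
    rw [e1]
    congr 1
    refine sum_mul_congr_support p _ _ fun ω h => ?_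
    rw [Real.logb_div (ne_of_gt (mul_pos (hposXZ ω h) (hposYZ ω h)))
        (ne_of_gt (mul_pos (hposW ω h) (hposZ ω h))),
      Real.logb_mul (ne_of_gt (hposXZ ω h)) (ne_of_gt (hposYZ ω h)),
      Real.logb_mul (ne_of_gt (hposW ω h)) (ne_of_gt (hposZ ω h))]
    ring
  rw [hexp, neg_nonneg]
  refine key_log_le p _ hp0 hp1 hr ?_
  have hSimg : True := trivial
  calc ∑ ω, p ω *
        (probEq p (fun ω' => (X ω', Z ω')) (X ω, Z ω) * probEq p (fun ω' => (Y ω', Z ω')) (Y ω, Z ω)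
          / (probEq p (fun ω' => ((X ω', Y ω'), Z ω')) ((X ω, Y ω), Z ω) * probEq p Z (Z ω)))
      = ∑ w ∈ Finset.image (fun ω' => ((X ω', Y ω'), Z ω')) Finset.univ,
          probEq p (fun ω' => ((X ω', Y ω'), Z ω')) w *
          (probEq p (fun ω' => (X ω', Z ω')) (w.1.1, w.2) * probEq p (fun ω' => (Y ω', Z ω')) (w.1.2, w.2)
            / (probEq p (fun ω' => ((X ω', Y ω'), Z ω')) w * probEq p Z w.2)) :=
        sum_mul_comp p (fun ω' => ((X ω', Y ω'), Z ω'))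
          (fun w => probEq p (fun ω' => (X ω', Z ω')) (w.1.1, w.2)
            * probEq p (fun ω' => (Y ω', Z ω')) (w.1.2, w.2)
            / (probEq p (fun ω' => ((X ω', Y ω'), Z ω')) w * probEq p Z w.2))
    _ ≤ ∑ w ∈ Finset.image (fun ω' => ((X ω', Y ω'), Z ω')) Finset.univ, probEq p (fun ω' => (X ω', Z ω')) (w.1.1, w.2)
          * probEq p (fun ω' => (Y ω', Z ω')) (w.1.2, w.2) * (probEq p Z w.2)⁻¹ := by
        refine Finset.sum_le_sum fun w _ => ?_
        by_cases h : probEq p (fun ω' => ((X ω', Y ω'), Z ω')) w = 0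
        · rw [h, zero_mul]
          have h1 := probEq_nonneg p hp0 (fun ω' => (X ω', Z ω')) (w.1.1, w.2)
          have h2 := probEq_nonneg p hp0 (fun ω' => (Y ω', Z ω')) (w.1.2, w.2)
          have h3 := inv_nonneg.2 (probEq_nonneg p hp0 Z w.2)
          positivity
        · exact le_of_eq (mul_div_cancel_aux _ _ _ _ h)
    _ ≤ 1 := by
        set Simg := Finset.image (fun ω' => ((X ω', Y ω'), Z ω')) (Finset.univ : Finset Ω) with hS
        rw [← Finset.sum_fiberwise_of_maps_to (s := Simg) (t := Finset.image Prod.snd Simg)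
          (g := Prod.snd) (fun w hw => Finset.mem_image_of_mem Prod.snd hw)
          (fun w => probEq p (fun ω' => (X ω', Z ω')) (w.1.1, w.2)
            * probEq p (fun ω' => (Y ω', Z ω')) (w.1.2, w.2) * (probEq p Z w.2)⁻¹)]
        have hfib : ∀ c ∈ Finset.image Prod.snd Simg,
            (∑ w ∈ Simg.filter fun w => w.2 = c,
              probEq p (fun ω' => (X ω', Z ω')) (w.1.1, w.2)
                * probEq p (fun ω' => (Y ω', Z ω')) (w.1.2, w.2) * (probEq p Z w.2)⁻¹)
              ≤ probEq p Z c := by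
          intro c _
          set F := Simg.filter fun w => w.2 = c with hF
          have hrw : ∀ w ∈ F,
              probEq p (fun ω' => (X ω', Z ω')) (w.1.1, w.2)
                * probEq p (fun ω' => (Y ω', Z ω')) (w.1.2, w.2) * (probEq p Z w.2)⁻¹
              = probEq p (fun ω' => (X ω', Z ω')) (w.1.1, c)
                * probEq p (fun ω' => (Y ω', Z ω')) (w.1.2, c) * (probEq p Z c)⁻¹ := by
            intro w hw
            rw [(Finset.mem_filter.1 hw).2]
          rw [Finset.sum_congr rfl hrw, ← Finset.sum_mul]
          -- bound the inner double sum
          have hinj : ∀ w ∈ F, ∀ w' ∈ F,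
              (w.1.1, w.1.2) = (w'.1.1, w'.1.2) → w = w' := by
            intro w hw w' hw' he
            have h2 : w.2 = c := (Finset.mem_filter.1 hw).2
            have h2' : w'.2 = c := (Finset.mem_filter.1 hw').2
            have e1 : w.1.1 = w'.1.1 := (Prod.mk.injEq _ _ _ _ ▸ he).1
            have e2 : w.1.2 = w'.1.2 := (Prod.mk.injEq _ _ _ _ ▸ he).2
            have : w.1 = w'.1 := Prod.ext e1 e2
            exact Prod.ext this (h2.trans h2'.symm)
          have hsum1 : ∑ w ∈ F, probEq p (fun ω' => (X ω', Z ω')) (w.1.1, c)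
                * probEq p (fun ω' => (Y ω', Z ω')) (w.1.2, c)
              = ∑ q ∈ F.image (fun w => (w.1.1, w.1.2)),
                probEq p (fun ω' => (X ω', Z ω')) (q.1, c)
                  * probEq p (fun ω' => (Y ω', Z ω')) (q.2, c) :=
            (Finset.sum_image (f := fun q : α × β => probEq p (fun ω' => (X ω', Z ω')) (q.1, c)
              * probEq p (fun ω' => (Y ω', Z ω')) (q.2, c)) hinj).symm
          set Fa := F.image fun w => w.1.1 with hFa
          set Fb := F.image fun w => w.1.2 with hFb
          have hsub : F.image (fun w => (w.1.1, w.1.2)) ⊆ Fa ×ˢ Fb := by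
            intro q hq
            obtain ⟨w, hw, rfl⟩ := Finset.mem_image.1 hq
            exact Finset.mem_product.2 ⟨Finset.mem_image_of_mem _ hw, Finset.mem_image_of_mem _ hw⟩
          have hsum2 : ∑ q ∈ F.image (fun w => (w.1.1, w.1.2)),
                probEq p (fun ω' => (X ω', Z ω')) (q.1, c)
                  * probEq p (fun ω' => (Y ω', Z ω')) (q.2, c)
              ≤ ∑ q ∈ Fa ×ˢ Fb, probEq p (fun ω' => (X ω', Z ω')) (q.1, c)
                  * probEq p (fun ω' => (Y ω', Z ω')) (q.2, c) := by
            refine Finset.sum_le_sum_of_subset_of_nonneg hsub fun q _ _ => ?_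
            exact mul_nonneg (probEq_nonneg p hp0 _ _) (probEq_nonneg p hp0 _ _)
          have hsum3 : ∑ q ∈ Fa ×ˢ Fb, probEq p (fun ω' => (X ω', Z ω')) (q.1, c)
                  * probEq p (fun ω' => (Y ω', Z ω')) (q.2, c)
              = (∑ a ∈ Fa, probEq p (fun ω' => (X ω', Z ω')) (a, c))
                * (∑ b ∈ Fb, probEq p (fun ω' => (Y ω', Z ω')) (b, c)) := by
            rw [Finset.sum_product, Finset.sum_mul_sum]
          have hSA : ∑ a ∈ Fa, probEq p (fun ω' => (X ω', Z ω')) (a, c) ≤ probEq p Z c := by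
            have hinj2 : ∀ a ∈ Fa, ∀ a' ∈ Fa, ((a, c) : α × γ) = (a', c) → a = a' := by
              intro a _ a' _ he
              exact (Prod.mk.injEq _ _ _ _ ▸ he).1
            rw [show ∑ a ∈ Fa, probEq p (fun ω' => (X ω', Z ω')) (a, c)
                = ∑ s ∈ Fa.image (fun a => ((a, c) : α × γ)),
                    probEq p (fun ω' => (X ω', Z ω')) s from (Finset.sum_image hinj2).symm]
            exact sum_probEq_le p hp0 (fun ω' => (X ω', Z ω')) Prod.snd _ c
              (fun s hs => by obtain ⟨a, _, rfl⟩ := Finset.mem_image.1 hs; rfl)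
          have hSB : ∑ b ∈ Fb, probEq p (fun ω' => (Y ω', Z ω')) (b, c) ≤ probEq p Z c := by
            have hinj2 : ∀ b ∈ Fb, ∀ b' ∈ Fb, ((b, c) : β × γ) = (b', c) → b = b' := by
              intro b _ b' _ he
              exact (Prod.mk.injEq _ _ _ _ ▸ he).1
            rw [show ∑ b ∈ Fb, probEq p (fun ω' => (Y ω', Z ω')) (b, c)
                = ∑ s ∈ Fb.image (fun b => ((b, c) : β × γ)),
                    probEq p (fun ω' => (Y ω', Z ω')) s from (Finset.sum_image hinj2).symm]
            exact sum_probEq_le p hp0 (fun ω' => (Y ω', Z ω')) Prod.snd _ c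
              (fun s hs => by obtain ⟨b, _, rfl⟩ := Finset.mem_image.1 hs; rfl)
          have hSAnn : 0 ≤ ∑ a ∈ Fa, probEq p (fun ω' => (X ω', Z ω')) (a, c) :=
            Finset.sum_nonneg fun a _ => probEq_nonneg p hp0 _ _
          have hSBnn : 0 ≤ ∑ b ∈ Fb, probEq p (fun ω' => (Y ω', Z ω')) (b, c) :=
            Finset.sum_nonneg fun b _ => probEq_nonneg p hp0 _ _
          have hinv : (0:ℝ) ≤ (probEq p Z c)⁻¹ := inv_nonneg.2 (probEq_nonneg p hp0 Z c)
          have hZc : (0:ℝ) ≤ probEq p Z c := probEq_nonneg p hp0 Z c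
          calc (∑ w ∈ F, probEq p (fun ω' => (X ω', Z ω')) (w.1.1, c)
                  * probEq p (fun ω' => (Y ω', Z ω')) (w.1.2, c)) * (probEq p Z c)⁻¹
              ≤ ((∑ a ∈ Fa, probEq p (fun ω' => (X ω', Z ω')) (a, c))
                  * (∑ b ∈ Fb, probEq p (fun ω' => (Y ω', Z ω')) (b, c))) * (probEq p Z c)⁻¹ := by
                refine mul_le_mul_of_nonneg_right ?_ hinv
                rw [hsum1, ← hsum3]
                exact hsum2
            _ ≤ (probEq p Z c * (∑ b ∈ Fb, probEq p (fun ω' => (Y ω', Z ω')) (b, c)))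
                  * (probEq p Z c)⁻¹ :=
                mul_le_mul_of_nonneg_right (mul_le_mul_of_nonneg_right hSA hSBnn) hinv
            _ = (probEq p Z c * (probEq p Z c)⁻¹)
                  * (∑ b ∈ Fb, probEq p (fun ω' => (Y ω', Z ω')) (b, c)) := by ring
            _ ≤ 1 * (∑ b ∈ Fb, probEq p (fun ω' => (Y ω', Z ω')) (b, c)) := by
                refine mul_le_mul_of_nonneg_right ?_ hSBnn
                rw [← div_eq_mul_inv]
                exact div_self_le_one _
            _ = ∑ b ∈ Fb, probEq p (fun ω' => (Y ω', Z ω')) (b, c) := one_mul _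
            _ ≤ probEq p Z c := hSB
        calc ∑ c ∈ Finset.image Prod.snd Simg, ∑ w ∈ Simg.filter fun w => w.2 = c,
              probEq p (fun ω' => (X ω', Z ω')) (w.1.1, w.2)
                * probEq p (fun ω' => (Y ω', Z ω')) (w.1.2, w.2) * (probEq p Z w.2)⁻¹
            ≤ ∑ c ∈ Finset.image Prod.snd Simg, probEq p Z c :=
              Finset.sum_le_sum hfib
          _ ≤ 1 := sum_probEq_le_one p hp0 hp1 Z _

lemma mi_nonneg (p : Ω → ℝ) (hp0 : ∀ ω, 0 ≤ p ω) (hp1 : ∑ ω, p ω = 1)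
    (X : Ω → α) (Y : Ω → β) : 0 ≤ miOf p X Y := by
  have h := condMI_nonneg p hp0 hp1 X Y (fun _ => (0 : ℕ))
  have e : condMIOf p X Y (fun _ => (0:ℕ)) = miOf p X Y := by
    simp only [condMIOf, condEntOf, miOf]
    rw [ent_const p hp1 (0:ℕ),
      ent_congr p (fun ω => (X ω, (0:ℕ))) X (fun ω ω' => by simp [Prod.mk.injEq]),
      ent_congr p (fun ω => (Y ω, (0:ℕ))) Y (fun ω ω' => by simp [Prod.mk.injEq]),
      ent_congr p (fun ω => ((X ω, Y ω), (0:ℕ))) (fun ω => (X ω, Y ω))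
        (fun ω ω' => by simp [Prod.mk.injEq])]
    ring
  linarith [e ▸ h]

lemma mi_comp_le (p : Ω → ℝ) (hp0 : ∀ ω, 0 ≤ p ω) (hp1 : ∑ ω, p ω = 1)
    (A : Ω → α) (B : Ω → β) (f : α → γ) :
    miOf p (fun ω => f (A ω)) B ≤ miOf p A B := by
  have h1 : miOf p A B = miOf p (fun ω => (A ω, f (A ω))) B :=
    mi_congr_left p A (fun ω => (A ω, f (A ω))) B
      (fun ω ω' => ⟨fun h => by show (A ω, f (A ω)) = (A ω', f (A ω')); rw [h],
        fun h => congrArg Prod.fst h⟩)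
  have h2 : miOf p (fun ω => (A ω, f (A ω))) B
      = miOf p (fun ω => f (A ω)) B + condMIOf p A B (fun ω => f (A ω)) :=
    mi_pair_left p A (fun ω => f (A ω)) B
  have h3 := condMI_nonneg p hp0 hp1 A B (fun ω => f (A ω))
  linarith

end AuxMI

section AuxProd

variable {Ω1 Ω2 : Type*} [Fintype Ω1] [Fintype Ω2] {α β γ : Type*}

lemma sum_fst (p1 : Ω1 → ℝ) (p2 : Ω2 → ℝ) (h2 : ∑ b, p2 b = 1) (f : Ω1 → ℝ) :
    ∑ ω : Ω1 × Ω2, (p1 ω.1 * p2 ω.2) * f ω.1 = ∑ a, p1 a * f a := by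
  rw [Fintype.sum_prod_type]
  refine Finset.sum_congr rfl fun a _ => ?_
  calc ∑ b, p1 a * p2 b * f a = ∑ b, (p1 a * f a) * p2 b :=
        Finset.sum_congr rfl fun b _ => by ring
    _ = (p1 a * f a) * ∑ b, p2 b := by rw [Finset.mul_sum]
    _ = p1 a * f a := by rw [h2, mul_one]

lemma probEq_fst (p1 : Ω1 → ℝ) (p2 : Ω2 → ℝ) (h2 : ∑ b, p2 b = 1) (X : Ω1 → α) (a : α) :
    probEq (fun ω : Ω1 × Ω2 => p1 ω.1 * p2 ω.2) (fun ω => X ω.1) a = probEq p1 X a := by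
  classical
  unfold probEq
  rw [Fintype.sum_prod_type]
  refine Finset.sum_congr rfl fun x _ => ?_
  by_cases h : X x = a
  · rw [if_pos h, Finset.sum_congr rfl (fun b _ => if_pos h)]
    calc ∑ y, p1 x * p2 y = p1 x * ∑ y, p2 y := by rw [Finset.mul_sum]
      _ = p1 x := by rw [h2, mul_one]
  · simp [h]

lemma probEq_snd (p1 : Ω1 → ℝ) (p2 : Ω2 → ℝ) (h1 : ∑ a, p1 a = 1) (X : Ω2 → α) (a : α) :
    probEq (fun ω : Ω1 × Ω2 => p1 ω.1 * p2 ω.2) (fun ω => X ω.2) a = probEq p2 X a := by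
  classical
  unfold probEq
  rw [Fintype.sum_prod_type_right]
  refine Finset.sum_congr rfl fun x _ => ?_
  by_cases h : X x = a
  · rw [if_pos h, Finset.sum_congr rfl (fun b _ => if_pos h)]
    calc ∑ y, p1 y * p2 x = (∑ y, p1 y) * p2 x := by rw [Finset.sum_mul]
      _ = p2 x := by rw [h1, one_mul]
  · simp [h]

lemma ent_fst (p1 : Ω1 → ℝ) (p2 : Ω2 → ℝ) (h2 : ∑ b, p2 b = 1) (X : Ω1 → α) :
    entOf (fun ω : Ω1 × Ω2 => p1 ω.1 * p2 ω.2) (fun ω => X ω.1) = entOf p1 X := by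
  unfold entOf
  congr 1
  calc ∑ ω : Ω1 × Ω2, (p1 ω.1 * p2 ω.2) *
        Real.logb 2 (probEq (fun ω' : Ω1 × Ω2 => p1 ω'.1 * p2 ω'.2) (fun ω' => X ω'.1) (X ω.1))
      = ∑ ω : Ω1 × Ω2, (p1 ω.1 * p2 ω.2) * Real.logb 2 (probEq p1 X (X ω.1)) :=
        Finset.sum_congr rfl fun ω _ => by rw [probEq_fst p1 p2 h2 X]
    _ = ∑ a, p1 a * Real.logb 2 (probEq p1 X (X a)) :=
        sum_fst p1 p2 h2 (fun a => Real.logb 2 (probEq p1 X (X a)))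

lemma mi_fst (p1 : Ω1 → ℝ) (p2 : Ω2 → ℝ) (h2 : ∑ b, p2 b = 1) (X : Ω1 → α) (B : Ω1 → β) :
    miOf (fun ω : Ω1 × Ω2 => p1 ω.1 * p2 ω.2) (fun ω => X ω.1) (fun ω => B ω.1)
      = miOf p1 X B := by
  unfold miOf
  rw [ent_fst p1 p2 h2 X, ent_fst p1 p2 h2 B]
  congr 1
  exact ent_fst p1 p2 h2 (fun a => (X a, B a))

end AuxProd

section AuxMix

variable {Ω1 : Type*} [Fintype Ω1] {α β : Type*}

lemma probEq_pair_snd (p1 : Ω1 → ℝ) {n : ℕ} (X : Ω1 × Fin n → α) (x : Ω1) (t : Fin n) :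
    probEq (fun ω : Ω1 × Fin n => p1 ω.1 * (n : ℝ)⁻¹) (fun ω => (X ω, ω.2)) (X (x, t), t)
      = (n : ℝ)⁻¹ * probEq p1 (fun y => X (y, t)) (X (x, t)) := by
  classical
  unfold probEq
  dsimp only
  rw [Fintype.sum_prod_type, Finset.mul_sum]
  refine Finset.sum_congr rfl fun y _ => ?_
  rw [Finset.sum_eq_single t (fun t' _ ht' => by
    exact if_neg (fun hc => ht' (congrArg Prod.snd hc)))
    (fun ht => absurd (Finset.mem_univ t) ht)]
  by_cases h : X (y, t) = X (x, t)
  · rw [if_pos (by rw [show X (y,t) = X (x,t) from h]), if_pos h]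
    ring
  · rw [if_neg (fun hc => h (congrArg Prod.fst hc)), if_neg h, mul_zero]

lemma probEq_uniform_snd (p1 : Ω1 → ℝ) (hp11 : ∑ x, p1 x = 1) {n : ℕ} (t : Fin n) :
    probEq (fun ω : Ω1 × Fin n => p1 ω.1 * (n : ℝ)⁻¹) (fun ω => ω.2) t = (n : ℝ)⁻¹ := by
  classical
  unfold probEq
  rw [Fintype.sum_prod_type]
  refine ((Finset.sum_congr rfl fun y _ =>
    (Finset.sum_eq_single t (fun t' _ ht' => if_neg ht')
      (fun ht => absurd (Finset.mem_univ t) ht)).trans (if_pos rfl))).trans ?_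
  calc ∑ y, p1 y * (n:ℝ)⁻¹ = (∑ y, p1 y) * (n:ℝ)⁻¹ := by rw [Finset.sum_mul]
    _ = (n:ℝ)⁻¹ := by rw [hp11, one_mul]

lemma sum_uniform_one {n : ℕ} (hn : 0 < n) : ∑ _t : Fin n, (n : ℝ)⁻¹ = 1 := by
  rw [Finset.sum_const, Finset.card_univ, Fintype.card_fin, nsmul_eq_mul]
  field_simp

lemma ent_pair_snd (p1 : Ω1 → ℝ) (hp10 : ∀ x, 0 ≤ p1 x) (hp11 : ∑ x, p1 x = 1)
    {n : ℕ} (hn : 0 < n) (X : Ω1 × Fin n → α) :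
    entOf (fun ω : Ω1 × Fin n => p1 ω.1 * (n : ℝ)⁻¹) (fun ω => (X ω, ω.2))
      = Real.logb 2 n + (n : ℝ)⁻¹ * ∑ t, entOf p1 (fun y => X (y, t)) := by
  classical
  have hnne : ((n : ℝ))⁻¹ ≠ 0 := by
    have : (0:ℝ) < n := by exact_mod_cast hn
    positivity
  unfold entOf
  have hterm : ∀ ω : Ω1 × Fin n, (p1 ω.1 * (n:ℝ)⁻¹) *
      Real.logb 2 (probEq (fun ω' : Ω1 × Fin n => p1 ω'.1 * (n:ℝ)⁻¹)
        (fun ω' => (X ω', ω'.2)) (X ω, ω.2))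
      = (p1 ω.1 * (n:ℝ)⁻¹) * (Real.logb 2 (n:ℝ)⁻¹
          + Real.logb 2 (probEq p1 (fun y => X (y, ω.2)) (X ω))) := by
    intro ω
    by_cases h : p1 ω.1 = 0
    · rw [h]; ring
    · have hq : 0 < probEq p1 (fun y => X (y, ω.2)) (X ω) := by
        have := le_probEq p1 hp10 (fun y => X (y, ω.2)) ω.1
        have h1 : X (ω.1, ω.2) = X ω := by rw [Prod.mk.eta]
        rw [h1] at this
        exact lt_of_lt_of_le (lt_of_le_of_ne (hp10 ω.1) (Ne.symm h)) this
      have h2 : probEq (fun ω' : Ω1 × Fin n => p1 ω'.1 * (n:ℝ)⁻¹)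
          (fun ω' => (X ω', ω'.2)) (X ω, ω.2)
          = (n:ℝ)⁻¹ * probEq p1 (fun y => X (y, ω.2)) (X ω) := by
        have := probEq_pair_snd p1 X ω.1 ω.2
        rw [Prod.mk.eta] at this
        exact this
      rw [h2, Real.logb_mul hnne (ne_of_gt hq)]
  rw [Finset.sum_congr rfl fun ω _ => hterm ω]
  have hsplit : ∑ ω : Ω1 × Fin n, (p1 ω.1 * (n:ℝ)⁻¹) * (Real.logb 2 (n:ℝ)⁻¹
      + Real.logb 2 (probEq p1 (fun y => X (y, ω.2)) (X ω)))
      = (∑ ω : Ω1 × Fin n, (p1 ω.1 * (n:ℝ)⁻¹)) * Real.logb 2 (n:ℝ)⁻¹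
        + ∑ ω : Ω1 × Fin n, (p1 ω.1 * (n:ℝ)⁻¹) *
            Real.logb 2 (probEq p1 (fun y => X (y, ω.2)) (X ω)) := by
    rw [Finset.sum_mul, ← Finset.sum_add_distrib]
    exact Finset.sum_congr rfl fun ω _ => by ring
  rw [hsplit]
  have hone : ∑ ω : Ω1 × Fin n, (p1 ω.1 * (n:ℝ)⁻¹) = 1 := by
    rw [Fintype.sum_prod_type]
    calc ∑ y, ∑ _t : Fin n, p1 y * (n:ℝ)⁻¹
        = ∑ y, p1 y * (n * (n:ℝ)⁻¹) := by
          refine Finset.sum_congr rfl fun y _ => ?_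
          rw [Finset.sum_const, Finset.card_univ, Fintype.card_fin, nsmul_eq_mul]
          ring
      _ = 1 := by
          rw [mul_inv_cancel₀ (by exact_mod_cast hn.ne' : (n:ℝ) ≠ 0)]
          simpa using hp11
  have hswap : ∑ ω : Ω1 × Fin n, (p1 ω.1 * (n:ℝ)⁻¹) *
      Real.logb 2 (probEq p1 (fun y => X (y, ω.2)) (X ω))
      = (n:ℝ)⁻¹ * ∑ t, ∑ y, p1 y * Real.logb 2 (probEq p1 (fun y' => X (y', t)) (X (y, t))) := by
    rw [Fintype.sum_prod_type, Finset.sum_comm, Finset.mul_sum]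
    refine Finset.sum_congr rfl fun t _ => ?_
    rw [Finset.mul_sum]
    exact Finset.sum_congr rfl fun y _ => by ring
  rw [hswap, hone, one_mul, Real.logb_inv]
  simp only [entOf]
  rw [Finset.mul_sum, Finset.mul_sum, neg_add, neg_neg, ← Finset.sum_neg_distrib]
  exact congrArg₂ _ rfl (Finset.sum_congr rfl fun t _ => by ring)

lemma ent_snd_uniform (p1 : Ω1 → ℝ) (hp11 : ∑ x, p1 x = 1) {n : ℕ} (hn : 0 < n) :
    entOf (fun ω : Ω1 × Fin n => p1 ω.1 * (n : ℝ)⁻¹) (fun ω => ω.2) = Real.logb 2 n := by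
  unfold entOf
  have h : ∀ ω : Ω1 × Fin n,
      probEq (fun ω' : Ω1 × Fin n => p1 ω'.1 * (n:ℝ)⁻¹) (fun ω' => ω'.2) ω.2 = (n:ℝ)⁻¹ :=
    fun ω => probEq_uniform_snd p1 hp11 ω.2
  rw [Finset.sum_congr rfl fun ω _ => by rw [h ω]]
  rw [← Finset.sum_mul]
  have hone : ∑ ω : Ω1 × Fin n, p1 ω.1 * (n:ℝ)⁻¹ = 1 := by
    rw [Fintype.sum_prod_type]
    calc ∑ y, ∑ _t : Fin n, p1 y * (n:ℝ)⁻¹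
        = ∑ y, p1 y * (n * (n:ℝ)⁻¹) := by
          refine Finset.sum_congr rfl fun y _ => ?_
          rw [Finset.sum_const, Finset.card_univ, Fintype.card_fin, nsmul_eq_mul]
          ring
      _ = 1 := by
          rw [mul_inv_cancel₀ (by exact_mod_cast hn.ne' : (n:ℝ) ≠ 0)]
          simpa using hp11
  rw [hone, one_mul, Real.logb_inv]
  ring

lemma condEnt_snd (p1 : Ω1 → ℝ) (hp10 : ∀ x, 0 ≤ p1 x) (hp11 : ∑ x, p1 x = 1)
    {n : ℕ} (hn : 0 < n) (X : Ω1 × Fin n → α) :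
    condEntOf (fun ω : Ω1 × Fin n => p1 ω.1 * (n : ℝ)⁻¹) X (fun ω => ω.2)
      = (n : ℝ)⁻¹ * ∑ t, entOf p1 (fun y => X (y, t)) := by
  unfold condEntOf
  rw [ent_pair_snd p1 hp10 hp11 hn X, ent_snd_uniform p1 hp11 hn]
  ring

lemma condMI_snd (p1 : Ω1 → ℝ) (hp10 : ∀ x, 0 ≤ p1 x) (hp11 : ∑ x, p1 x = 1)
    {n : ℕ} (hn : 0 < n) (A : Ω1 × Fin n → α) (B : Ω1 × Fin n → β) :
    condMIOf (fun ω : Ω1 × Fin n => p1 ω.1 * (n : ℝ)⁻¹) A B (fun ω => ω.2)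
      = (n : ℝ)⁻¹ * ∑ t, miOf p1 (fun y => A (y, t)) (fun y => B (y, t)) := by
  unfold condMIOf
  rw [condEnt_snd p1 hp10 hp11 hn A, condEnt_snd p1 hp10 hp11 hn B,
    condEnt_snd p1 hp10 hp11 hn (fun ω => (A ω, B ω))]
  unfold miOf
  rw [← mul_add, ← mul_sub, ← Finset.sum_add_distrib, ← Finset.sum_sub_distrib]

end AuxMix

section AuxPi

variable {ι : Type*} [Fintype ι] [DecidableEq ι] {W : ι → Type*} [∀ i, Fintype (W i)]
  {α : Type*}

lemma sum_pi_prod (q : ∀ i, W i → ℝ) :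
    ∑ ys : ∀ i, W i, ∏ i, q i (ys i) = ∏ i, ∑ w, q i w := (Fintype.prod_sum q).symm

lemma sum_pi_prod_one (q : ∀ i, W i → ℝ) (hq1 : ∀ i, ∑ w, q i w = 1) :
    ∑ ys : ∀ i, W i, ∏ i, q i (ys i) = 1 := by
  rw [sum_pi_prod q]
  calc ∏ i, ∑ w, q i w = ∏ _i : ι, (1:ℝ) := Finset.prod_congr rfl fun i _ => hq1 i
    _ = 1 := Finset.prod_const_one

lemma prod_update_eq (q : ∀ i, W i → ℝ) (ys : ∀ i, W i) (j : ι) (v : W j) :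
    (∏ i, q i (Function.update ys j v i)) * q j (ys j) = (∏ i, q i (ys i)) * q j v := by
  have h : ∀ i, q i (Function.update ys j v i)
      = Function.update (fun i => q i (ys i)) j (q j v) i := by
    intro i
    by_cases h : i = j
    · subst h; simp
    · simp [Function.update_of_ne h]
  rw [Finset.prod_congr rfl fun i _ => h i,
    Finset.prod_update_of_mem (Finset.mem_univ j),
    Finset.prod_eq_mul_prod_sdiff_singleton_of_mem (Finset.mem_univ j) (fun i => q i (ys i))]
  ring

lemma probEq_pi_pair (q : ∀ i, W i → ℝ) (hq1 : ∀ i, ∑ w, q i w = 1)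
    (F : (∀ i, W i) → α) (j : ι) (hF : ∀ ys v, F (Function.update ys j v) = F ys)
    (m : α) (s : W j) :
    probEq (fun ys : ∀ i, W i => ∏ i, q i (ys i)) (fun ys => (F ys, ys j)) (m, s)
      = probEq (fun ys : ∀ i, W i => ∏ i, q i (ys i)) F m * q j s := by
  classical
  have hσ : Function.Involutive
      (fun x : (∀ i, W i) × W j => (Function.update x.1 j x.2, x.1 j)) := by
    intro x
    refine Prod.ext ?_ ?_
    · funext i
      by_cases h : i = j
      · subst h; simp
      · simp [Function.update_of_ne h]
    · simp
  calc probEq (fun ys : ∀ i, W i => ∏ i, q i (ys i)) (fun ys => (F ys, ys j)) (m, s)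
      = ∑ ys : ∀ i, W i, (if F ys = m ∧ ys j = s then (∏ i, q i (ys i)) else 0) := by
        unfold probEq
        refine Finset.sum_congr rfl fun ys _ => ?_
        by_cases h : F ys = m ∧ ys j = s
        · rw [if_pos (Prod.ext h.1 h.2), if_pos h]
        · rw [if_neg (fun hc => h ⟨congrArg Prod.fst hc, congrArg Prod.snd hc⟩), if_neg h]
    _ = ∑ x : (∀ i, W i) × W j,
          (if F x.1 = m ∧ x.1 j = s then (∏ i, q i (x.1 i)) * q j x.2 else 0) := by
        rw [Fintype.sum_prod_type]
        refine (Finset.sum_congr rfl fun ys _ => ?_).symm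
        by_cases h : F ys = m ∧ ys j = s
        · rw [Finset.sum_congr rfl fun v _ => if_pos h, if_pos h]
          calc ∑ v : W j, (∏ i, q i (ys i)) * q j v
              = (∏ i, q i (ys i)) * ∑ v, q j v := by rw [Finset.mul_sum]
            _ = ∏ i, q i (ys i) := by rw [hq1 j, mul_one]
        · rw [Finset.sum_congr rfl fun v _ => if_neg h, if_neg h, Finset.sum_const_zero]
    _ = ∑ x : (∀ i, W i) × W j,
          (if F x.1 = m ∧ x.2 = s then (∏ i, q i (x.1 i)) * q j x.2 else 0) := by
        refine Fintype.sum_bijective _ hσ.bijective _ _ fun x => ?_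
        by_cases h : F x.1 = m ∧ x.1 j = s
        · rw [if_pos h, if_pos (by
            refine ⟨?_, h.2⟩
            rw [hF x.1 x.2]; exact h.1)]
          exact (prod_update_eq q x.1 j x.2).symm
        · rw [if_neg h, if_neg (fun hc => h ⟨by rw [← hF x.1 x.2]; exact hc.1, hc.2⟩)]
    _ = probEq (fun ys : ∀ i, W i => ∏ i, q i (ys i)) F m * q j s := by
        rw [Fintype.sum_prod_type]
        unfold probEq
        rw [Finset.sum_mul]
        refine Finset.sum_congr rfl fun ys _ => ?_
        rw [Finset.sum_eq_single s (fun v _ hv => if_neg (fun hc => hv hc.2))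
          (fun hs => absurd (Finset.mem_univ s) hs)]
        by_cases h : F ys = m
        · rw [if_pos ⟨h, rfl⟩, if_pos h]
        · rw [if_neg (fun hc => h hc.1), if_neg h, zero_mul]

lemma probEq_pi_coord (q : ∀ i, W i → ℝ) (hq1 : ∀ i, ∑ w, q i w = 1) (j : ι) (s : W j) :
    probEq (fun ys : ∀ i, W i => ∏ i, q i (ys i)) (fun ys => ys j) s = q j s := by
  classical
  have h := probEq_pi_pair q hq1 (fun _ => (0:ℕ)) j (fun _ _ => rfl) 0 s
  have h1 : probEq (fun ys : ∀ i, W i => ∏ i, q i (ys i)) (fun _ => (0:ℕ)) 0 = 1 := by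
    unfold probEq
    refine (Finset.sum_congr rfl fun ys _ => if_pos rfl).trans (sum_pi_prod_one q hq1)
  have h2 : probEq (fun ys : ∀ i, W i => ∏ i, q i (ys i))
      (fun ys => ((0:ℕ), ys j)) ((0:ℕ), s)
      = probEq (fun ys : ∀ i, W i => ∏ i, q i (ys i)) (fun ys => ys j) s := by
    simp only [probEq]
    refine Finset.sum_congr rfl fun ys _ => ?_
    by_cases hc : ys j = s
    · rw [if_pos hc, if_pos (show ((0:ℕ), ys j) = ((0:ℕ), s) from Prod.ext rfl hc)]
    · rw [if_neg hc, if_neg (show ¬(((0:ℕ), ys j) = ((0:ℕ), s)) from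
        fun h' => hc (congrArg Prod.snd h'))]
  rw [h2] at h
  rw [h, h1, one_mul]

end AuxPi

section AuxPush

variable {Ω : Type*} [Fintype Ω] {α γ : Type*} [Fintype γ]

open Classical in
lemma probEq_comp_sum (p : Ω → ℝ) (Z : Ω → γ) (h : γ → α) (a : α) :
    probEq p (fun ω => h (Z ω)) a = ∑ z, if h z = a then probEq p Z z else 0 := by
  classical
  unfold probEq
  symm
  calc ∑ z, (if h z = a then ∑ ω, (if Z ω = z then p ω else 0) else 0)
      = ∑ z, ∑ ω, (if h z = a ∧ Z ω = z then p ω else 0) := by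
        refine Finset.sum_congr rfl fun z _ => ?_
        by_cases hz : h z = a
        · rw [if_pos hz]
          exact Finset.sum_congr rfl fun ω _ => by
            by_cases hw : Z ω = z
            · rw [if_pos hw, if_pos ⟨hz, hw⟩]
            · rw [if_neg hw, if_neg (fun hc => hw hc.2)]
        · rw [if_neg hz]
          exact (Finset.sum_eq_zero fun ω _ => if_neg (fun hc => hz hc.1)).symm
    _ = ∑ ω, ∑ z, (if h z = a ∧ Z ω = z then p ω else 0) := Finset.sum_comm
    _ = ∑ ω, (if h (Z ω) = a then p ω else 0) := by
        refine Finset.sum_congr rfl fun ω _ => ?_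
        rw [Finset.sum_eq_single (Z ω) (fun z _ hz => if_neg (fun hc => hz hc.2.symm))
          (fun hz => absurd (Finset.mem_univ (Z ω)) hz)]
        by_cases hc : h (Z ω) = a
        · rw [if_pos ⟨hc, rfl⟩, if_pos hc]
        · rw [if_neg (fun h' => hc h'.1), if_neg hc]

open Classical in
lemma probEq_comp_congr_law (p : Ω → ℝ) (Z Z' : Ω → γ)
    (hlaw : ∀ z, probEq p Z z = probEq p Z' z) (h : γ → α) (a : α) :
    probEq p (fun ω => h (Z ω)) a = probEq p (fun ω => h (Z' ω)) a := by
  rw [probEq_comp_sum p Z h a, probEq_comp_sum p Z' h a]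
  exact Finset.sum_congr rfl fun z _ => by rw [hlaw z]

end AuxPush

noncomputable def KL2div {Ω α : Type*} [Fintype Ω] (p : Ω → ℝ) (X X' : Ω → α) : ℝ :=
  ∑ ω, p ω * Real.logb 2 (probEq p X (X ω) / probEq p X' (X ω))

section AuxKL

variable {Ω : Type*} [Fintype Ω] {α β : Type*}

lemma kl2_eq_zero_of_law (p : Ω → ℝ) (X X' : Ω → α)
    (h : ∀ a, probEq p X a = probEq p X' a) : KL2div p X X' = 0 := by
  unfold KL2div
  refine Finset.sum_eq_zero fun ω _ => ?_
  rw [h (X ω)]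
  by_cases hz : probEq p X' (X ω) = 0
  · rw [hz]
    simp
  · rw [div_self hz]
    simp

lemma mi_as_sum (p : Ω → ℝ) (hp0 : ∀ ω, 0 ≤ p ω) (X : Ω → α) (Y : Ω → β) :
    miOf p X Y = ∑ ω, p ω * Real.logb 2
      (probEq p (fun ω' => (X ω', Y ω')) (X ω, Y ω)
        / (probEq p X (X ω) * probEq p Y (Y ω))) := by
  have hposX : ∀ ω, p ω ≠ 0 → 0 < probEq p X (X ω) := fun ω h =>
    lt_of_lt_of_le (lt_of_le_of_ne (hp0 ω) (Ne.symm h)) (le_probEq p hp0 X ω)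
  have hposY : ∀ ω, p ω ≠ 0 → 0 < probEq p Y (Y ω) := fun ω h =>
    lt_of_lt_of_le (lt_of_le_of_ne (hp0 ω) (Ne.symm h)) (le_probEq p hp0 Y ω)
  have hposXY : ∀ ω, p ω ≠ 0 → 0 < probEq p (fun ω' => (X ω', Y ω')) (X ω, Y ω) := fun ω h =>
    lt_of_lt_of_le (lt_of_le_of_ne (hp0 ω) (Ne.symm h)) (le_probEq p hp0 _ ω)
  simp only [miOf, entOf]
  have e1 : ∀ (c₁ c₂ c₃ : Ω → ℝ),
      (-∑ ω, p ω * c₁ ω) + (-∑ ω, p ω * c₂ ω) - (-∑ ω, p ω * c₃ ω)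
        = ∑ ω, p ω * (c₃ ω - c₁ ω - c₂ ω) := by
    intro c₁ c₂ c₃
    rw [show (fun ω => p ω * (c₃ ω - c₁ ω - c₂ ω))
        = fun ω => p ω * c₃ ω - p ω * c₁ ω - p ω * c₂ ω from funext fun ω => by ring]
    rw [Finset.sum_sub_distrib, Finset.sum_sub_distrib]
    ring
  rw [e1]
  refine sum_mul_congr_support p _ _ fun ω h => ?_
  rw [Real.logb_div (ne_of_gt (hposXY ω h))
      (ne_of_gt (mul_pos (hposX ω h) (hposY ω h))),
    Real.logb_mul (ne_of_gt (hposX ω h)) (ne_of_gt (hposY ω h))]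
  ring

lemma kl2_pair (p : Ω → ℝ) (hp0 : ∀ ω, 0 ≤ p ω)
    (X : Ω → α) (Y : Ω → β) (X' : Ω → α) (Y' : Ω → β)
    (hind : ∀ a b, probEq p (fun ω => (X' ω, Y' ω)) (a, b) = probEq p X' a * probEq p Y' b)
    (hlaw : ∀ b, probEq p Y' b = probEq p Y b)
    (habs : ∀ ω, p ω ≠ 0 → probEq p X' (X ω) ≠ 0) :
    KL2div p (fun ω => (X ω, Y ω)) (fun ω => (X' ω, Y' ω))
      = miOf p X Y + KL2div p X X' := by
  have hposX : ∀ ω, p ω ≠ 0 → 0 < probEq p X (X ω) := fun ω h =>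
    lt_of_lt_of_le (lt_of_le_of_ne (hp0 ω) (Ne.symm h)) (le_probEq p hp0 X ω)
  have hposY : ∀ ω, p ω ≠ 0 → 0 < probEq p Y (Y ω) := fun ω h =>
    lt_of_lt_of_le (lt_of_le_of_ne (hp0 ω) (Ne.symm h)) (le_probEq p hp0 Y ω)
  have hposXY : ∀ ω, p ω ≠ 0 → 0 < probEq p (fun ω' => (X ω', Y ω')) (X ω, Y ω) := fun ω h =>
    lt_of_lt_of_le (lt_of_le_of_ne (hp0 ω) (Ne.symm h)) (le_probEq p hp0 _ ω)
  have hposX' : ∀ ω, p ω ≠ 0 → 0 < probEq p X' (X ω) := fun ω h =>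
    lt_of_le_of_ne (probEq_nonneg p hp0 X' (X ω)) (Ne.symm (habs ω h))
  rw [mi_as_sum p hp0 X Y]
  unfold KL2div
  calc ∑ ω, p ω * Real.logb 2
        (probEq p (fun ω' => (X ω', Y ω')) (X ω, Y ω)
          / probEq p (fun ω' => (X' ω', Y' ω')) (X ω, Y ω))
      = ∑ ω, p ω * (Real.logb 2 (probEq p (fun ω' => (X ω', Y ω')) (X ω, Y ω)
            / (probEq p X (X ω) * probEq p Y (Y ω)))
          + Real.logb 2 (probEq p X (X ω) / probEq p X' (X ω))) := by
        refine sum_mul_congr_support p _ _ fun ω h => ?_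
        rw [hind (X ω) (Y ω), hlaw (Y ω)]
        rw [Real.logb_div (ne_of_gt (hposXY ω h))
            (ne_of_gt (mul_pos (hposX' ω h) (hposY ω h))),
          Real.logb_mul (ne_of_gt (hposX' ω h)) (ne_of_gt (hposY ω h)),
          Real.logb_div (ne_of_gt (hposXY ω h))
            (ne_of_gt (mul_pos (hposX ω h) (hposY ω h))),
          Real.logb_mul (ne_of_gt (hposX ω h)) (ne_of_gt (hposY ω h)),
          Real.logb_div (ne_of_gt (hposX ω h)) (ne_of_gt (hposX' ω h))]
        ring
    _ = ∑ ω, (p ω * Real.logb 2 (probEq p (fun ω' => (X ω', Y ω')) (X ω, Y ω)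
            / (probEq p X (X ω) * probEq p Y (Y ω)))
          + p ω * Real.logb 2 (probEq p X (X ω) / probEq p X' (X ω))) :=
        Finset.sum_congr rfl fun ω _ => by ring
    _ = _ := Finset.sum_add_distrib

lemma kl2_dpi (p : Ω → ℝ) (hp0 : ∀ ω, 0 ≤ p ω) (hp1 : ∑ ω, p ω = 1)
    (X X' : Ω → α) (f : α → β)
    (habs : ∀ ω, p ω ≠ 0 → probEq p X' (X ω) ≠ 0) :
    KL2div p (fun ω => f (X ω)) (fun ω => f (X' ω)) ≤ KL2div p X X' := by
  classical
  have hposX : ∀ ω, p ω ≠ 0 → 0 < probEq p X (X ω) := fun ω h =>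
    lt_of_lt_of_le (lt_of_le_of_ne (hp0 ω) (Ne.symm h)) (le_probEq p hp0 X ω)
  have hposX' : ∀ ω, p ω ≠ 0 → 0 < probEq p X' (X ω) := fun ω h =>
    lt_of_le_of_ne (probEq_nonneg p hp0 X' (X ω)) (Ne.symm (habs ω h))
  have hposFX : ∀ ω, p ω ≠ 0 → 0 < probEq p (fun ω' => f (X ω')) (f (X ω)) := fun ω h =>
    lt_of_lt_of_le (hposX ω h) (probEq_le_comp p hp0 X f (X ω))
  have hposFX' : ∀ ω, p ω ≠ 0 → 0 < probEq p (fun ω' => f (X' ω')) (f (X ω)) := fun ω h =>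
    lt_of_lt_of_le (hposX' ω h) (probEq_le_comp p hp0 X' f (X ω))
  -- key bound
  have hkey : ∑ ω, p ω * Real.logb 2
      (probEq p (fun ω' => f (X ω')) (f (X ω)) * probEq p X' (X ω)
        / (probEq p X (X ω) * probEq p (fun ω' => f (X' ω')) (f (X ω)))) ≤ 0 := by
    refine key_log_le p _ hp0 hp1 (fun ω h => div_pos (mul_pos (hposFX ω h) (hposX' ω h))
      (mul_pos (hposX ω h) (hposFX' ω h))) ?_
    calc ∑ ω, p ω *
          (probEq p (fun ω' => f (X ω')) (f (X ω)) * probEq p X' (X ω)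
            / (probEq p X (X ω) * probEq p (fun ω' => f (X' ω')) (f (X ω))))
        = ∑ a ∈ Finset.image X Finset.univ, probEq p X a *
            (probEq p (fun ω' => f (X ω')) (f a) * probEq p X' a
              / (probEq p X a * probEq p (fun ω' => f (X' ω')) (f a))) :=
          sum_mul_comp p X (fun a => probEq p (fun ω' => f (X ω')) (f a) * probEq p X' a
            / (probEq p X a * probEq p (fun ω' => f (X' ω')) (f a)))
      _ ≤ ∑ a ∈ Finset.image X Finset.univ,
            probEq p (fun ω' => f (X ω')) (f a) * probEq p X' a
              * (probEq p (fun ω' => f (X' ω')) (f a))⁻¹ := by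
          refine Finset.sum_le_sum fun a _ => ?_
          by_cases hz : probEq p X a = 0
          · rw [hz, zero_mul]
            have h1 := probEq_nonneg p hp0 (fun ω' => f (X ω')) (f a)
            have h2 := probEq_nonneg p hp0 X' a
            have h3 := inv_nonneg.2 (probEq_nonneg p hp0 (fun ω' => f (X' ω')) (f a))
            positivity
          · exact le_of_eq (mul_div_cancel_aux _ _ _ _ hz)
      _ ≤ 1 := by
          rw [← Finset.sum_fiberwise_of_maps_to (s := Finset.image X Finset.univ)
            (t := Finset.image f (Finset.image X Finset.univ)) (g := f)
            (fun a ha => Finset.mem_image_of_mem f ha)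
            (fun a => probEq p (fun ω' => f (X ω')) (f a) * probEq p X' a
              * (probEq p (fun ω' => f (X' ω')) (f a))⁻¹)]
          have hfib : ∀ b ∈ Finset.image f (Finset.image X Finset.univ),
              (∑ a ∈ (Finset.image X Finset.univ).filter fun a => f a = b,
                probEq p (fun ω' => f (X ω')) (f a) * probEq p X' a
                  * (probEq p (fun ω' => f (X' ω')) (f a))⁻¹)
                ≤ probEq p (fun ω' => f (X ω')) b := by
            intro b _
            have hrw : ∀ a ∈ (Finset.image X Finset.univ).filter fun a => f a = b,
                probEq p (fun ω' => f (X ω')) (f a) * probEq p X' a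
                  * (probEq p (fun ω' => f (X' ω')) (f a))⁻¹
                = probEq p (fun ω' => f (X ω')) b
                  * (probEq p (fun ω' => f (X' ω')) b)⁻¹ * probEq p X' a := by
              intro a ha
              rw [(Finset.mem_filter.1 ha).2]
              ring
            rw [Finset.sum_congr rfl hrw, ← Finset.mul_sum]
            have hBsum : ∑ a ∈ (Finset.image X Finset.univ).filter (fun a => f a = b),
                probEq p X' a ≤ probEq p (fun ω' => f (X' ω')) b :=
              sum_probEq_le p hp0 X' f _ b (fun a ha => (Finset.mem_filter.1 ha).2)
            have hBnn : 0 ≤ ∑ a ∈ (Finset.image X Finset.univ).filter (fun a => f a = b),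
                probEq p X' a := Finset.sum_nonneg fun a _ => probEq_nonneg p hp0 X' a
            have hFAnn : 0 ≤ probEq p (fun ω' => f (X ω')) b := probEq_nonneg p hp0 _ b
            have hFBinv : (0:ℝ) ≤ (probEq p (fun ω' => f (X' ω')) b)⁻¹ :=
              inv_nonneg.2 (probEq_nonneg p hp0 _ b)
            calc probEq p (fun ω' => f (X ω')) b * (probEq p (fun ω' => f (X' ω')) b)⁻¹
                  * ∑ a ∈ (Finset.image X Finset.univ).filter (fun a => f a = b),
                      probEq p X' a
                ≤ probEq p (fun ω' => f (X ω')) b * (probEq p (fun ω' => f (X' ω')) b)⁻¹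
                  * probEq p (fun ω' => f (X' ω')) b :=
                  mul_le_mul_of_nonneg_left hBsum (mul_nonneg hFAnn hFBinv)
              _ = probEq p (fun ω' => f (X ω')) b
                  * ((probEq p (fun ω' => f (X' ω')) b) * (probEq p (fun ω' => f (X' ω')) b)⁻¹) := by
                  ring
              _ ≤ probEq p (fun ω' => f (X ω')) b * 1 := by
                  refine mul_le_mul_of_nonneg_left ?_ hFAnn
                  rw [← div_eq_mul_inv]
                  exact div_self_le_one _
              _ = probEq p (fun ω' => f (X ω')) b := mul_one _
          calc ∑ b ∈ Finset.image f (Finset.image X Finset.univ),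
                ∑ a ∈ (Finset.image X Finset.univ).filter fun a => f a = b,
                  probEq p (fun ω' => f (X ω')) (f a) * probEq p X' a
                    * (probEq p (fun ω' => f (X' ω')) (f a))⁻¹
              ≤ ∑ b ∈ Finset.image f (Finset.image X Finset.univ),
                  probEq p (fun ω' => f (X ω')) b := Finset.sum_le_sum hfib
            _ ≤ 1 := sum_probEq_le_one p hp0 hp1 (fun ω' => f (X ω')) _
  -- conclude
  unfold KL2div
  have hdiff : ∀ ω, p ω ≠ 0 →
      p ω * Real.logb 2 (probEq p (fun ω' => f (X ω')) ((fun ω' => f (X ω')) ω)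
          / probEq p (fun ω' => f (X' ω')) ((fun ω' => f (X ω')) ω))
        - p ω * Real.logb 2 (probEq p X (X ω) / probEq p X' (X ω))
      = p ω * Real.logb 2
          (probEq p (fun ω' => f (X ω')) (f (X ω)) * probEq p X' (X ω)
            / (probEq p X (X ω) * probEq p (fun ω' => f (X' ω')) (f (X ω)))) := by
    intro ω h
    rw [show ((fun ω' => f (X ω')) ω) = f (X ω) from rfl]
    rw [Real.logb_div (ne_of_gt (hposFX ω h)) (ne_of_gt (hposFX' ω h)),
      Real.logb_div (ne_of_gt (hposX ω h)) (ne_of_gt (hposX' ω h)),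
      Real.logb_div (ne_of_gt (mul_pos (hposFX ω h) (hposX' ω h)))
        (ne_of_gt (mul_pos (hposX ω h) (hposFX' ω h))),
      Real.logb_mul (ne_of_gt (hposFX ω h)) (ne_of_gt (hposX' ω h)),
      Real.logb_mul (ne_of_gt (hposX ω h)) (ne_of_gt (hposFX' ω h))]
    ring
  have hsplit : ∑ ω, p ω * Real.logb 2 (probEq p (fun ω' => f (X ω')) ((fun ω' => f (X ω')) ω)
        / probEq p (fun ω' => f (X' ω')) ((fun ω' => f (X ω')) ω))
      - ∑ ω, p ω * Real.logb 2 (probEq p X (X ω) / probEq p X' (X ω))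
      = ∑ ω, p ω * Real.logb 2
          (probEq p (fun ω' => f (X ω')) (f (X ω)) * probEq p X' (X ω)
            / (probEq p X (X ω) * probEq p (fun ω' => f (X' ω')) (f (X ω)))) := by
    rw [← Finset.sum_sub_distrib]
    refine Finset.sum_congr rfl fun ω _ => ?_
    by_cases h : p ω = 0
    · rw [h]; ring
    · exact hdiff ω h
  linarith [hsplit ▸ hkey]

end AuxKL

section AuxMore

variable {Ω : Type*} [Fintype Ω] {α β γ : Type*}

lemma sum_probEq_total [Fintype α] (p : Ω → ℝ) (X : Ω → α) :
    ∑ a, probEq p X a = ∑ ω, p ω := by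
  classical
  unfold probEq
  rw [Finset.sum_comm]
  refine Finset.sum_congr rfl fun ω _ => ?_
  rw [Finset.sum_eq_single (X ω) (fun b _ hb => if_neg (fun hc => hb hc.symm))
    (fun hb => absurd (Finset.mem_univ (X ω)) hb), if_pos rfl]

lemma condMI_le_mi (p : Ω → ℝ) (hp0 : ∀ ω, 0 ≤ p ω) (hp1 : ∑ ω, p ω = 1)
    (A : Ω → α) (B : Ω → β) (Cc : Ω → γ) :
    condMIOf p A B Cc ≤ miOf p (fun ω => (A ω, Cc ω)) B := by
  have h := mi_pair_left p A Cc B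
  have h2 := mi_nonneg p hp0 hp1 Cc B
  linarith

lemma mi_telescope (p : Ω → ℝ) (hp1 : ∑ ω, p ω = 1) {n : ℕ} (A : Ω → α) (Zc : Ω → Fin n → γ) :
    miOf p A Zc = ∑ t : Fin n, condMIOf p A (fun ω => Zc ω t)
      (fun ω => (fun s : Fin n => if (s : ℕ) < (t : ℕ) then some (Zc ω s) else none)) := by
  classical
  set C : ℕ → Ω → (Fin n → Option γ) :=
    fun m ω s => if (s : ℕ) < m then some (Zc ω s) else none with hC
  have key : ∀ t : Fin n, condMIOf p A (fun ω => Zc ω t) (fun ω => C (t : ℕ) ω)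
      = miOf p A (C ((t : ℕ) + 1)) - miOf p A (C (t : ℕ)) := by
    intro t
    have h1 : miOf p A (fun ω => (Zc ω t, C (t : ℕ) ω))
        = miOf p A (C (t : ℕ)) + condMIOf p A (fun ω => Zc ω t) (fun ω => C (t : ℕ) ω) :=
      mi_pair_right p A (fun ω => Zc ω t) (fun ω => C (t : ℕ) ω)
    have h2 : miOf p A (fun ω => (Zc ω t, C (t : ℕ) ω)) = miOf p A (C ((t : ℕ) + 1)) := by
      refine mi_congr_right p A _ _ fun ω ω' => ?_
      constructor
      · rintro h
        have ht : Zc ω t = Zc ω' t := congrArg Prod.fst h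
        have hpre : C (t : ℕ) ω = C (t : ℕ) ω' := congrArg Prod.snd h
        funext s
        simp only [hC]
        by_cases hs : (s : ℕ) < (t : ℕ) + 1
        · rw [if_pos hs, if_pos hs]
          rcases Nat.lt_succ_iff_lt_or_eq.1 hs with hlt | heq
          · have := congrFun hpre s
            simp only [hC, if_pos hlt] at this
            rw [Option.some.injEq] at this
            rw [this]
          · have hst : s = t := Fin.ext heq
            rw [hst, ht]
        · rw [if_neg hs, if_neg hs]
      · intro h
        have hcomp : ∀ s : Fin n, (s : ℕ) < (t : ℕ) + 1 → Zc ω s = Zc ω' s := by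
          intro s hs
          have := congrFun h s
          simp only [hC, if_pos hs, Option.some.injEq] at this
          exact this
        refine Prod.ext ?_ ?_
        · exact hcomp t (Nat.lt_succ_self _)
        · funext s
          simp only [hC]
          by_cases hs : (s : ℕ) < (t : ℕ)
          · rw [if_pos hs, if_pos hs, hcomp s (Nat.lt_succ_of_lt hs)]
          · rw [if_neg hs, if_neg hs]
    linarith
  have hsum : ∑ t : Fin n, condMIOf p A (fun ω => Zc ω t) (fun ω => C (t : ℕ) ω)
      = ∑ m ∈ Finset.range n, (miOf p A (C (m + 1)) - miOf p A (C m)) := by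
    rw [Finset.sum_congr rfl fun t _ => key t]
    exact Fin.sum_univ_eq_sum_range (fun m => miOf p A (C (m + 1)) - miOf p A (C m)) n
  have htel : ∑ m ∈ Finset.range n, (miOf p A (C (m + 1)) - miOf p A (C m))
      = miOf p A (C n) - miOf p A (C 0) :=
    Finset.sum_range_sub (fun m => miOf p A (C m)) n
  have h0 : miOf p A (C 0) = miOf p A (fun _ : Ω => (0 : ℕ)) := by
    refine mi_congr_right p A _ _ fun ω ω' => ?_
    simp only [hC]
    constructor
    · intro _; trivial
    · intro _
      funext s
      rw [if_neg (Nat.not_lt_zero _), if_neg (Nat.not_lt_zero _)]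
  have hn' : miOf p A (C n) = miOf p A Zc := by
    refine mi_congr_right p A _ _ fun ω ω' => ?_
    simp only [hC]
    constructor
    · intro h
      funext s
      have := congrFun h s
      simp only [if_pos s.isLt, Option.some.injEq] at this
      exact this
    · intro h
      funext s
      rw [if_pos s.isLt, if_pos s.isLt, congrFun h s]
  have hcongrsum : ∑ t : Fin n, condMIOf p A (fun ω => Zc ω t)
      (fun ω => (fun s : Fin n => if (s : ℕ) < (t : ℕ) then some (Zc ω s) else none))
      = ∑ t : Fin n, condMIOf p A (fun ω => Zc ω t) (fun ω => C (t : ℕ) ω) := rfl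
  rw [hcongrsum, hsum, htel, h0, hn', mi_const_right p hp1 A (0:ℕ), sub_zero]

end AuxMore

section Main

variable (k : ℕ) (Y : ℕ → Type) [∀ i, Fintype (Y i)] [∀ i, Nonempty (Y i)]
variable (P : (∀ i : Fin (k + 1), Y i) → ℝ)
variable (n : ℕ) (φ : ∀ ℓ : ℕ, (Fin n → Y ℓ) → ℕ → ℕ) (g : (Fin n → Y k) → ℕ → Bool)

lemma iid_nonneg (hP : IsPMF P) : ∀ ys, 0 ≤ iidK k Y P n ys :=
  fun _ => Finset.prod_nonneg fun _ _ => hP.1 _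

lemma pt_nonneg (hP : IsPMF P) (hΔ : 0 < DeltaCM k Y P n φ g) :
    ∀ ys, 0 ≤ ptildeCM k Y P n φ g ys := by
  intro ys
  unfold ptildeCM
  split
  · exact div_nonneg (iid_nonneg k Y P n hP ys) hΔ.le
  · exact le_refl 0

lemma pt_sum (hΔ : 0 < DeltaCM k Y P n φ g) : ∑ ys, ptildeCM k Y P n φ g ys = 1 := by
  classical
  unfold ptildeCM
  calc ∑ ys, (if ys ∈ DsetCM k Y P n φ g then iidK k Y P n ys / DeltaCM k Y P n φ g else 0)
      = (∑ ys, (if ys ∈ DsetCM k Y P n φ g then iidK k Y P n ys else 0))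
          / DeltaCM k Y P n φ g := by
        rw [Finset.sum_div]
        refine Finset.sum_congr rfl fun ys _ => ?_
        split
        · rfl
        · rw [zero_div]
    _ = 1 := by
        rw [show (∑ ys, (if ys ∈ DsetCM k Y P n φ g then iidK k Y P n ys else 0))
          = DeltaCM k Y P n φ g from rfl]
        exact div_self (ne_of_gt hΔ)

lemma marg_nonneg (hP : IsPMF P) (hΔ : 0 < DeltaCM k Y P n φ g) (i : Fin (k+1))
    (s : Fin n → Y i) : 0 ≤ margSeqT k Y P n φ g i s :=
  probEq_nonneg _ (pt_nonneg k Y P n φ g hP hΔ) _ _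

lemma marg_sum_one (hP : IsPMF P) (hΔ : 0 < DeltaCM k Y P n φ g) (i : Fin (k+1)) :
    ∑ s, margSeqT k Y P n φ g i s = 1 := by
  calc ∑ s, margSeqT k Y P n φ g i s = ∑ ys, ptildeCM k Y P n φ g ys :=
        sum_probEq_total (ptildeCM k Y P n φ g) (fun ys => ys i)
    _ = 1 := pt_sum k Y P n φ g hΔ

lemma marg_ge_pt (hP : IsPMF P) (hΔ : 0 < DeltaCM k Y P n φ g)
    (ys : ∀ i : Fin (k + 1), Fin n → Y i) (i : Fin (k+1)) :
    ptildeCM k Y P n φ g ys ≤ margSeqT k Y P n φ g i (ys i) :=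
  le_probEq _ (pt_nonneg k Y P n φ g hP hΔ) (fun ys => ys i) ys

/-- product of the tilde marginals -/
noncomputable def pmargCM : (∀ i : Fin (k + 1), Fin n → Y i) → ℝ :=
  fun ys => ∏ i, margSeqT k Y P n φ g i (ys i)

lemma pmarg_nonneg (hP : IsPMF P) (hΔ : 0 < DeltaCM k Y P n φ g) :
    ∀ ys, 0 ≤ pmargCM k Y P n φ g ys :=
  fun _ => Finset.prod_nonneg fun i _ => marg_nonneg k Y P n φ g hP hΔ i _

lemma pmarg_sum (hP : IsPMF P) (hΔ : 0 < DeltaCM k Y P n φ g) :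
    ∑ ys, pmargCM k Y P n φ g ys = 1 :=
  sum_pi_prod_one _ (fun i => marg_sum_one k Y P n φ g hP hΔ i)

lemma pmarg_pos (hP : IsPMF P) (hΔ : 0 < DeltaCM k Y P n φ g)
    (ys : ∀ i : Fin (k + 1), Fin n → Y i) (hys : ptildeCM k Y P n φ g ys ≠ 0) :
    0 < pmargCM k Y P n φ g ys :=
  Finset.prod_pos fun i _ => lt_of_lt_of_le
    (lt_of_le_of_ne (pt_nonneg k Y P n φ g hP hΔ ys) (Ne.symm hys))
    (marg_ge_pt k Y P n φ g hP hΔ ys i)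

lemma extendTup_lt (ys : ∀ i : Fin (k + 1), Fin n → Y i) (ℓ : ℕ) (h : ℓ < k + 1) :
    extendTup k Y n ys ℓ = ys ⟨ℓ, h⟩ := dif_pos h

lemma extendTup_update (ys : ∀ i : Fin (k + 1), Fin n → Y i) (j' : Fin (k+1))
    (v : Fin n → Y j') (ℓ : ℕ) (h : ℓ ≠ (j' : ℕ)) :
    extendTup k Y n (Function.update ys j' v) ℓ = extendTup k Y n ys ℓ := by
  unfold extendTup
  by_cases hℓ : ℓ < k + 1
  · rw [dif_pos hℓ, dif_pos hℓ,
      Function.update_of_ne (fun he => h (congrArg Fin.val he)) v ys]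
  · rw [dif_neg hℓ, dif_neg hℓ]

lemma msgRec_congr (ys ys' : ∀ ℓ : ℕ, Fin n → Y ℓ) :
    ∀ j, (∀ ℓ, ℓ ≤ j → ys ℓ = ys' ℓ) → msgRec Y n φ ys j = msgRec Y n φ ys' j := by
  intro j
  induction j with
  | zero =>
    intro h
    unfold msgRec
    rw [h 0 le_rfl]
  | succ m ih =>
    intro h
    unfold msgRec
    rw [h (m+1) le_rfl, ih (fun ℓ hℓ => h ℓ (Nat.le_succ_of_le hℓ))]

lemma msgF_update (j : ℕ) (j' : Fin (k+1)) (hj : j < (j' : ℕ))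
    (ys : ∀ i : Fin (k + 1), Fin n → Y i) (v : Fin n → Y j') :
    msgRec Y n φ (extendTup k Y n (Function.update ys j' v)) j
      = msgRec Y n φ (extendTup k Y n ys) j :=
  msgRec_congr Y n φ _ _ j (fun ℓ hℓ =>
    extendTup_update k Y n ys j' v ℓ (Nat.ne_of_lt (lt_of_le_of_lt hℓ hj)))

lemma n_pos (hP : IsPMF P) (hΔ : 0 < DeltaCM k Y P n φ g) : 0 < n := by
  rcases Nat.eq_zero_or_pos n with hn | hn
  · exfalso
    subst hn
    have hzero : DeltaCM k Y P 0 φ g = 0 := by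
      unfold DeltaCM probSet
      refine Finset.sum_eq_zero fun ys _ => if_neg ?_
      rintro ⟨-, htyp⟩
      obtain ⟨a, ha⟩ : ∃ a, P a ≠ 0 := by
        by_contra hall
        push_neg at hall
        have h1 := hP.2
        rw [Finset.sum_congr rfl fun a _ => hall a] at h1
        simp at h1
      have hspec := (htyp a).1
      have hμ : μseq 0 = 0 := by
        unfold μseq
        rw [Nat.cast_zero]
        exact Real.zero_rpow (by norm_num)
      rw [hμ, Nat.cast_zero, div_zero, zero_sub, abs_neg, abs_of_nonneg (hP.1 a)] at hspec
      exact ha (le_antisymm hspec (hP.1 a))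
    rw [hzero] at hΔ
    exact lt_irrefl 0 hΔ
  · exact hn

end Main

section Main2

variable {Ω1 : Type*} [Fintype Ω1]

lemma prod_unif_sum_one (p1 : Ω1 → ℝ) (hp11 : ∑ x, p1 x = 1) {n : ℕ} (hn : 0 < n) :
    ∑ ω : Ω1 × Fin n, p1 ω.1 * (n : ℝ)⁻¹ = 1 := by
  rw [Fintype.sum_prod_type]
  calc ∑ y, ∑ _t : Fin n, p1 y * (n:ℝ)⁻¹
      = ∑ y, p1 y * (n * (n:ℝ)⁻¹) := by
        refine Finset.sum_congr rfl fun y _ => ?_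
        rw [Finset.sum_const, Finset.card_univ, Fintype.card_fin, nsmul_eq_mul]
        ring
    _ = 1 := by
        rw [mul_inv_cancel₀ (by exact_mod_cast hn.ne' : (n:ℝ) ≠ 0)]
        simpa using hp11

end Main2

section Main3

variable (k : ℕ) (Y : ℕ → Type) [∀ i, Fintype (Y i)] [∀ i, Nonempty (Y i)]
variable (P : (∀ i : Fin (k + 1), Y i) → ℝ)
variable (n : ℕ) (φ : ∀ ℓ : ℕ, (Fin n → Y ℓ) → ℕ → ℕ) (g : (Fin n → Y k) → ℕ → Bool)

/-- splitting a source tuple into its first `k` components and its last component -/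
def sliceEquiv : (∀ i : Fin (k + 1), Fin n → Y i) ≃
    ((∀ j : Fin k, Fin n → Y (j : ℕ)) × (Fin n → Y k)) where
  toFun ys := (fun j => ys (idxLo k j), ys (Fin.last k))
  invFun x := fun i => Fin.lastCases (motive := fun i => Fin n → Y i) x.2 x.1 i
  left_inv ys := by
    funext i
    induction i using Fin.lastCases with
    | last =>
      show Fin.lastCases (motive := fun i => Fin n → Y i) (ys (Fin.last k))
        (fun j => ys (idxLo k j)) (Fin.last k) = ys (Fin.last k)
      exact Fin.lastCases_last
    | cast j =>
      show Fin.lastCases (motive := fun i => Fin n → Y i) (ys (Fin.last k))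
        (fun j => ys (idxLo k j)) j.castSucc = ys j.castSucc
      exact Fin.lastCases_castSucc j
  right_inv x := by
    refine Prod.ext ?_ ?_
    · funext j
      show Fin.lastCases (motive := fun i => Fin n → Y i) x.2 x.1 (Fin.castSucc j) = x.1 j
      exact Fin.lastCases_castSucc j
    · show Fin.lastCases (motive := fun i => Fin n → Y i) x.2 x.1 (Fin.last k) = x.2
      exact Fin.lastCases_last

lemma probEq_pmarg_msg (hP : IsPMF P) (hΔ : 0 < DeltaCM k Y P n φ g) (hk : 0 < k)
    (m : ℕ) :
    probEq (pmargCM k Y P n φ g)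
      (fun ys => msgRec Y n φ (extendTup k Y n ys) (k - 1)) m
      = QmsgCM k Y P n φ g m := by
  classical
  have hk1 : k - 1 < k := Nat.sub_lt hk one_pos
  have hmsg : ∀ (pys : ∀ j : Fin k, Fin n → Y (j : ℕ)) (v : Fin n → Y k),
      msgRec Y n φ (extendTup k Y n ((sliceEquiv k Y n).symm (pys, v))) (k - 1)
        = msgRec Y n φ (partialExt k Y n pys) (k - 1) := by
    intro pys v
    refine msgRec_congr Y n φ _ _ (k - 1) fun ℓ hℓ => ?_
    have hℓk : ℓ < k := lt_of_le_of_lt hℓ hk1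
    rw [extendTup_lt k Y n _ ℓ (lt_trans hℓk (Nat.lt_succ_self k))]
    unfold partialExt
    rw [dif_pos hℓk]
    show Fin.lastCases (motive := fun i => Fin n → Y i) v pys
      ⟨ℓ, lt_trans hℓk (Nat.lt_succ_self k)⟩ = pys ⟨ℓ, hℓk⟩
    exact Fin.lastCases_castSucc (⟨ℓ, hℓk⟩ : Fin k)
  have hpm : ∀ (pys : ∀ j : Fin k, Fin n → Y (j : ℕ)) (v : Fin n → Y k),
      pmargCM k Y P n φ g ((sliceEquiv k Y n).symm (pys, v))
        = (∏ j : Fin k, margSeqT k Y P n φ g (idxLo k j) (pys j))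
          * margSeqT k Y P n φ g (Fin.last k) v := by
    intro pys v
    unfold pmargCM
    rw [Fin.prod_univ_castSucc]
    congr 1
    · refine Finset.prod_congr rfl fun j _ => ?_
      show margSeqT k Y P n φ g (Fin.castSucc j)
        (Fin.lastCases (motive := fun i => Fin n → Y i) v pys (Fin.castSucc j)) = _
      rw [Fin.lastCases_castSucc]
      rfl
    · show margSeqT k Y P n φ g (Fin.last k)
        (Fin.lastCases (motive := fun i => Fin n → Y i) v pys (Fin.last k)) = _
      rw [Fin.lastCases_last]
  unfold probEq
  rw [← Equiv.sum_comp (sliceEquiv k Y n).symm, Fintype.sum_prod_type]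
  unfold QmsgCM
  dsimp only
  refine Finset.sum_congr rfl fun pys _ => ?_
  by_cases hc : msgRec Y n φ (partialExt k Y n pys) (k - 1) = m
  · rw [if_pos hc]
    refine (Finset.sum_congr rfl fun v (_ : v ∈ Finset.univ) =>
      (if_pos ((hmsg pys v).trans hc)).trans (hpm pys v)).trans ?_
    rw [← Finset.mul_sum]
    exact congrArg _ (marg_sum_one k Y P n φ g hP hΔ (Fin.last k))
  · rw [if_neg hc, mul_zero]
    refine (Finset.sum_congr rfl fun v (_ : v ∈ Finset.univ) =>
      if_neg (fun hcc => hc ((hmsg pys v).symm.trans hcc))).trans ?_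
    exact Finset.sum_const_zero

end Main3

section Main4

variable (k : ℕ) (Y : ℕ → Type) [∀ i, Fintype (Y i)] [∀ i, Nonempty (Y i)]
variable (P : (∀ i : Fin (k + 1), Y i) → ℝ)
variable (n : ℕ) (φ : ∀ ℓ : ℕ, (Fin n → Y ℓ) → ℕ → ℕ) (g : (Fin n → Y k) → ℕ → Bool)

lemma part2_term (hP : IsPMF P) (hΔ : 0 < DeltaCM k Y P n φ g) (j : Fin k) :
    miOf (pfullCM k Y P n φ g) (fun ω => MtilRV k Y n φ (j : ℕ) ω)
      (fun ω => ω.1 (idxHi k j))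
      ≤ n * miOf (pfullCM k Y P n φ g) (UvarCM k Y n φ (j : ℕ))
          (fun ω => ω.1 (idxHi k j) ω.2) := by
  have hn := n_pos k Y P n φ g hP hΔ
  have hnne : ((n : ℝ)) ≠ 0 := by exact_mod_cast hn.ne'
  have hpt0 := pt_nonneg k Y P n φ g hP hΔ
  have hpt1 := pt_sum k Y P n φ g hΔ
  have hpf : pfullCM k Y P n φ g
      = fun ω : (∀ i : Fin (k + 1), Fin n → Y i) × Fin n =>
          ptildeCM k Y P n φ g ω.1 * (n : ℝ)⁻¹ :=
    funext fun ω => div_eq_mul_inv _ _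
  rw [hpf]
  have hp0 : ∀ ω : (∀ i : Fin (k + 1), Fin n → Y i) × Fin n,
      0 ≤ ptildeCM k Y P n φ g ω.1 * (n : ℝ)⁻¹ :=
    fun ω => mul_nonneg (hpt0 ω.1) (by positivity)
  have hp1 : ∑ ω : (∀ i : Fin (k + 1), Fin n → Y i) × Fin n,
      ptildeCM k Y P n φ g ω.1 * (n : ℝ)⁻¹ = 1 :=
    prod_unif_sum_one (ptildeCM k Y P n φ g) hpt1 hn
  -- identify the LHS with mutual information on the base space
  have hL : miOf (fun ω : (∀ i : Fin (k + 1), Fin n → Y i) × Fin n =>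
        ptildeCM k Y P n φ g ω.1 * (n : ℝ)⁻¹)
        (fun ω => MtilRV k Y n φ (j : ℕ) ω) (fun ω => ω.1 (idxHi k j))
      = miOf (ptildeCM k Y P n φ g)
          (fun ys => msgRec Y n φ (extendTup k Y n ys) (j : ℕ))
          (fun ys => ys (idxHi k j)) :=
    mi_fst (ptildeCM k Y P n φ g) (fun _ : Fin n => (n : ℝ)⁻¹) (sum_uniform_one hn)
      (fun ys => msgRec Y n φ (extendTup k Y n ys) (j : ℕ)) (fun ys => ys (idxHi k j))
  rw [hL]
  -- chain rule on the U side
  have h1 : miOf (fun ω : (∀ i : Fin (k + 1), Fin n → Y i) × Fin n =>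
        ptildeCM k Y P n φ g ω.1 * (n : ℝ)⁻¹)
        (UvarCM k Y n φ (j : ℕ)) (fun ω => ω.1 (idxHi k j) ω.2)
      = miOf (fun ω : (∀ i : Fin (k + 1), Fin n → Y i) × Fin n =>
          ptildeCM k Y P n φ g ω.1 * (n : ℝ)⁻¹)
        (fun ω => ((MtilRV k Y n φ (j : ℕ) ω, prefixAll k Y n ω), ω.2))
        (fun ω => ω.1 (idxHi k j) ω.2) := by
    refine mi_congr_left _ _ _ _ fun ω ω' => ?_
    unfold UvarCM
    simp only [Prod.mk.injEq]
    tauto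
  have h2 : miOf (fun ω : (∀ i : Fin (k + 1), Fin n → Y i) × Fin n =>
        ptildeCM k Y P n φ g ω.1 * (n : ℝ)⁻¹)
        (fun ω => ((MtilRV k Y n φ (j : ℕ) ω, prefixAll k Y n ω), ω.2))
        (fun ω => ω.1 (idxHi k j) ω.2)
      = miOf (fun ω : (∀ i : Fin (k + 1), Fin n → Y i) × Fin n =>
            ptildeCM k Y P n φ g ω.1 * (n : ℝ)⁻¹)
          (fun ω => ω.2) (fun ω => ω.1 (idxHi k j) ω.2)
        + condMIOf (fun ω : (∀ i : Fin (k + 1), Fin n → Y i) × Fin n =>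
            ptildeCM k Y P n φ g ω.1 * (n : ℝ)⁻¹)
          (fun ω => (MtilRV k Y n φ (j : ℕ) ω, prefixAll k Y n ω))
          (fun ω => ω.1 (idxHi k j) ω.2) (fun ω => ω.2) :=
    mi_pair_left _ (fun ω => (MtilRV k Y n φ (j : ℕ) ω, prefixAll k Y n ω))
      (fun ω => ω.2) (fun ω => ω.1 (idxHi k j) ω.2)
  have h3 : 0 ≤ miOf (fun ω : (∀ i : Fin (k + 1), Fin n → Y i) × Fin n =>
        ptildeCM k Y P n φ g ω.1 * (n : ℝ)⁻¹)
      (fun ω => ω.2) (fun ω => ω.1 (idxHi k j) ω.2) :=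
    mi_nonneg _ hp0 hp1 _ _
  have h4 : condMIOf (fun ω : (∀ i : Fin (k + 1), Fin n → Y i) × Fin n =>
        ptildeCM k Y P n φ g ω.1 * (n : ℝ)⁻¹)
        (fun ω => (MtilRV k Y n φ (j : ℕ) ω, prefixAll k Y n ω))
        (fun ω => ω.1 (idxHi k j) ω.2) (fun ω => ω.2)
      = (n : ℝ)⁻¹ * ∑ t : Fin n, miOf (ptildeCM k Y P n φ g)
          (fun ys => (MtilRV k Y n φ (j : ℕ) (ys, t), prefixAll k Y n (ys, t)))
          (fun ys => ys (idxHi k j) t) :=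
    condMI_snd (ptildeCM k Y P n φ g) hpt0 hpt1 hn
      (fun ω => (MtilRV k Y n φ (j : ℕ) ω, prefixAll k Y n ω))
      (fun ω => ω.1 (idxHi k j) ω.2)
  -- per-time-index bound
  have h5 : ∀ t : Fin n,
      condMIOf (ptildeCM k Y P n φ g)
        (fun ys => msgRec Y n φ (extendTup k Y n ys) (j : ℕ))
        (fun ys => ys (idxHi k j) t)
        (fun ys => (fun s : Fin n =>
          if (s : ℕ) < (t : ℕ) then some (ys (idxHi k j) s) else none))
      ≤ miOf (ptildeCM k Y P n φ g)
          (fun ys => (MtilRV k Y n φ (j : ℕ) (ys, t), prefixAll k Y n (ys, t)))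
          (fun ys => ys (idxHi k j) t) := by
    intro t
    refine le_trans (condMI_le_mi (ptildeCM k Y P n φ g) hpt0 hpt1
      (fun ys => msgRec Y n φ (extendTup k Y n ys) (j : ℕ))
      (fun ys => ys (idxHi k j) t)
      (fun ys => (fun s : Fin n =>
        if (s : ℕ) < (t : ℕ) then some (ys (idxHi k j) s) else none))) ?_
    exact mi_comp_le (ptildeCM k Y P n φ g) hpt0 hpt1
      (fun ys => (MtilRV k Y n φ (j : ℕ) (ys, t), prefixAll k Y n (ys, t)))
      (fun ys => ys (idxHi k j) t)
      (fun x => (x.1, fun s : Fin n => x.2 (idxHi k j) s))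
  -- telescope
  have h6 : miOf (ptildeCM k Y P n φ g)
      (fun ys => msgRec Y n φ (extendTup k Y n ys) (j : ℕ)) (fun ys => ys (idxHi k j))
      = ∑ t : Fin n, condMIOf (ptildeCM k Y P n φ g)
          (fun ys => msgRec Y n φ (extendTup k Y n ys) (j : ℕ))
          (fun ys => ys (idxHi k j) t)
          (fun ys => (fun s : Fin n =>
            if (s : ℕ) < (t : ℕ) then some (ys (idxHi k j) s) else none)) :=
    mi_telescope (ptildeCM k Y P n φ g) hpt1
      (fun ys => msgRec Y n φ (extendTup k Y n ys) (j : ℕ)) (fun ys => ys (idxHi k j))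
  calc miOf (ptildeCM k Y P n φ g)
        (fun ys => msgRec Y n φ (extendTup k Y n ys) (j : ℕ)) (fun ys => ys (idxHi k j))
      = ∑ t : Fin n, condMIOf (ptildeCM k Y P n φ g)
          (fun ys => msgRec Y n φ (extendTup k Y n ys) (j : ℕ))
          (fun ys => ys (idxHi k j) t)
          (fun ys => (fun s : Fin n =>
            if (s : ℕ) < (t : ℕ) then some (ys (idxHi k j) s) else none)) := h6
    _ ≤ ∑ t : Fin n, miOf (ptildeCM k Y P n φ g)
          (fun ys => (MtilRV k Y n φ (j : ℕ) (ys, t), prefixAll k Y n (ys, t)))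
          (fun ys => ys (idxHi k j) t) := Finset.sum_le_sum fun t _ => h5 t
    _ = n * ((n : ℝ)⁻¹ * ∑ t : Fin n, miOf (ptildeCM k Y P n φ g)
          (fun ys => (MtilRV k Y n φ (j : ℕ) (ys, t), prefixAll k Y n (ys, t)))
          (fun ys => ys (idxHi k j) t)) := by
        rw [← mul_assoc, mul_inv_cancel₀ hnne, one_mul]
    _ ≤ n * miOf (fun ω : (∀ i : Fin (k + 1), Fin n → Y i) × Fin n =>
          ptildeCM k Y P n φ g ω.1 * (n : ℝ)⁻¹)
        (UvarCM k Y n φ (j : ℕ)) (fun ω => ω.1 (idxHi k j) ω.2) := by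
        rw [← h4]
        refine mul_le_mul_of_nonneg_left ?_ (by positivity)
        rw [h1, h2]
        linarith

end Main4

section Main5

variable (k : ℕ) (Y : ℕ → Type) [∀ i, Fintype (Y i)] [∀ i, Nonempty (Y i)]
variable (P : (∀ i : Fin (k + 1), Y i) → ℝ)
variable (n : ℕ) (φ : ∀ ℓ : ℕ, (Fin n → Y ℓ) → ℕ → ℕ) (g : (Fin n → Y k) → ℕ → Bool)

/-- the product law of the tilde sources and an independent copy with product marginals -/
noncomputable def phatCM :
    (∀ i : Fin (k + 1), Fin n → Y i) × (∀ i : Fin (k + 1), Fin n → Y i) → ℝ :=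
  fun ω => ptildeCM k Y P n φ g ω.1 * pmargCM k Y P n φ g ω.2

lemma phat_nonneg (hP : IsPMF P) (hΔ : 0 < DeltaCM k Y P n φ g) :
    ∀ ω, 0 ≤ phatCM k Y P n φ g ω :=
  fun ω => mul_nonneg (pt_nonneg k Y P n φ g hP hΔ ω.1)
    (pmarg_nonneg k Y P n φ g hP hΔ ω.2)

lemma phat_sum (hP : IsPMF P) (hΔ : 0 < DeltaCM k Y P n φ g) :
    ∑ ω, phatCM k Y P n φ g ω = 1 := by
  unfold phatCM
  rw [Fintype.sum_prod_type]
  calc ∑ a, ∑ b, ptildeCM k Y P n φ g a * pmargCM k Y P n φ g b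
      = ∑ a, ptildeCM k Y P n φ g a * ∑ b, pmargCM k Y P n φ g b :=
        Finset.sum_congr rfl fun a _ => (Finset.mul_sum _ _ _).symm
    _ = 1 := by
        rw [pmarg_sum k Y P n φ g hP hΔ]
        calc ∑ a, ptildeCM k Y P n φ g a * 1 = ∑ a, ptildeCM k Y P n φ g a :=
              Finset.sum_congr rfl fun a _ => mul_one _
          _ = 1 := pt_sum k Y P n φ g hΔ

lemma habs_snd {α : Type*} (hP : IsPMF P) (hΔ : 0 < DeltaCM k Y P n φ g)
    (Φ : (∀ i : Fin (k + 1), Fin n → Y i) → α)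
    (ω0 : (∀ i : Fin (k + 1), Fin n → Y i) × (∀ i : Fin (k + 1), Fin n → Y i))
    (h0 : phatCM k Y P n φ g ω0 ≠ 0) :
    probEq (phatCM k Y P n φ g) (fun ω => Φ ω.2) (Φ ω0.1) ≠ 0 := by
  classical
  have hpt : ptildeCM k Y P n φ g ω0.1 ≠ 0 := fun h => h0 (by unfold phatCM; rw [h, zero_mul])
  have hpm : 0 < pmargCM k Y P n φ g ω0.1 := pmarg_pos k Y P n φ g hP hΔ ω0.1 hpt
  have hls : pmargCM k Y P n φ g ω0.1
      ≤ probEq (phatCM k Y P n φ g) (fun ω => Φ ω.2) (Φ ω0.1) := by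
    have h1 : pmargCM k Y P n φ g ω0.1
        = ∑ ω : (∀ i : Fin (k + 1), Fin n → Y i) × (∀ i : Fin (k + 1), Fin n → Y i),
            (if ω.2 = ω0.1 then phatCM k Y P n φ g ω else 0) := by
      unfold phatCM
      rw [Fintype.sum_prod_type]
      calc pmargCM k Y P n φ g ω0.1
          = ∑ a, ptildeCM k Y P n φ g a * pmargCM k Y P n φ g ω0.1 := by
            rw [← Finset.sum_mul, pt_sum k Y P n φ g hΔ, one_mul]
        _ = ∑ a, ∑ b, (if b = ω0.1 then ptildeCM k Y P n φ g a * pmargCM k Y P n φ g b else 0) := by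
            refine Finset.sum_congr rfl fun a _ => ?_
            rw [Finset.sum_eq_single ω0.1 (fun b _ hb => if_neg hb)
              (fun hb => absurd (Finset.mem_univ ω0.1) hb), if_pos rfl]
    rw [h1]
    unfold probEq
    refine Finset.sum_le_sum fun ω _ => ?_
    by_cases h : ω.2 = ω0.1
    · rw [if_pos h, if_pos (congrArg Φ h)]
    · rw [if_neg h]
      split
      · exact phat_nonneg k Y P n φ g hP hΔ ω
      · exact le_refl 0
  exact ne_of_gt (lt_of_lt_of_le hpm hls)

lemma probEq_Gmsg (hΔ : 0 < DeltaCM k Y P n φ g) (r : ℕ) (a : ℕ) :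
    probEq (phatCM k Y P n φ g) (fun ω => msgRec Y n φ (extendTup k Y n ω.2) r) a
      = probEq (pmargCM k Y P n φ g) (fun ys => msgRec Y n φ (extendTup k Y n ys) r) a :=
  probEq_snd (ptildeCM k Y P n φ g) (pmargCM k Y P n φ g) (pt_sum k Y P n φ g hΔ)
    (fun ys => msgRec Y n φ (extendTup k Y n ys) r) a

lemma probEq_extsnd (hP : IsPMF P) (hΔ : 0 < DeltaCM k Y P n φ g) (ℓ : ℕ)
    (hr : ℓ < k + 1) (b : Fin n → Y ℓ) :
    probEq (phatCM k Y P n φ g) (fun ω => extendTup k Y n ω.2 ℓ) b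
      = margSeqT k Y P n φ g ⟨ℓ, hr⟩ b := by
  rw [show probEq (phatCM k Y P n φ g) (fun ω => extendTup k Y n ω.2 ℓ) b
      = probEq (pmargCM k Y P n φ g) (fun ys => extendTup k Y n ys ℓ) b from
    probEq_snd (ptildeCM k Y P n φ g) (pmargCM k Y P n φ g) (pt_sum k Y P n φ g hΔ)
      (fun ys => extendTup k Y n ys ℓ) b]
  rw [show (fun ys : ∀ i : Fin (k + 1), Fin n → Y i => extendTup k Y n ys ℓ)
    = fun ys => ys ⟨ℓ, hr⟩ from funext fun ys => extendTup_lt k Y n ys ℓ hr]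
  exact probEq_pi_coord (fun i => margSeqT k Y P n φ g i)
    (fun i => marg_sum_one k Y P n φ g hP hΔ i) ⟨ℓ, hr⟩ b

lemma probEq_extfst (hP : IsPMF P) (hΔ : 0 < DeltaCM k Y P n φ g) (ℓ : ℕ)
    (hr : ℓ < k + 1) (b : Fin n → Y ℓ) :
    probEq (phatCM k Y P n φ g) (fun ω => extendTup k Y n ω.1 ℓ) b
      = margSeqT k Y P n φ g ⟨ℓ, hr⟩ b := by
  rw [show probEq (phatCM k Y P n φ g) (fun ω => extendTup k Y n ω.1 ℓ) b
      = probEq (ptildeCM k Y P n φ g) (fun ys => extendTup k Y n ys ℓ) b from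
    probEq_fst (ptildeCM k Y P n φ g) (pmargCM k Y P n φ g)
      (pmarg_sum k Y P n φ g hP hΔ) (fun ys => extendTup k Y n ys ℓ) b]
  rw [show (fun ys : ∀ i : Fin (k + 1), Fin n → Y i => extendTup k Y n ys ℓ)
    = fun ys => ys ⟨ℓ, hr⟩ from funext fun ys => extendTup_lt k Y n ys ℓ hr]
  rfl

lemma hind_lemma (hP : IsPMF P) (hΔ : 0 < DeltaCM k Y P n φ g) (r : ℕ)
    (hr : r + 1 < k + 1) (a : ℕ) (b : Fin n → Y (r + 1)) :
    probEq (phatCM k Y P n φ g)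
      (fun ω => (msgRec Y n φ (extendTup k Y n ω.2) r, extendTup k Y n ω.2 (r + 1))) (a, b)
      = probEq (phatCM k Y P n φ g) (fun ω => msgRec Y n φ (extendTup k Y n ω.2) r) a
        * probEq (phatCM k Y P n φ g) (fun ω => extendTup k Y n ω.2 (r + 1)) b := by
  classical
  rw [show probEq (phatCM k Y P n φ g)
      (fun ω => (msgRec Y n φ (extendTup k Y n ω.2) r, extendTup k Y n ω.2 (r + 1))) (a, b)
      = probEq (pmargCM k Y P n φ g)
        (fun ys => (msgRec Y n φ (extendTup k Y n ys) r, extendTup k Y n ys (r + 1))) (a, b) from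
    probEq_snd (ptildeCM k Y P n φ g) (pmargCM k Y P n φ g) (pt_sum k Y P n φ g hΔ)
      (fun ys => (msgRec Y n φ (extendTup k Y n ys) r, extendTup k Y n ys (r + 1))) (a, b)]
  rw [show (fun ys : ∀ i : Fin (k + 1), Fin n → Y i =>
        (msgRec Y n φ (extendTup k Y n ys) r, extendTup k Y n ys (r + 1)))
      = fun ys => (msgRec Y n φ (extendTup k Y n ys) r, ys ⟨r + 1, hr⟩) from
    funext fun ys => by rw [extendTup_lt k Y n ys (r + 1) hr]]
  rw [probEq_Gmsg k Y P n φ g hΔ r a, probEq_extsnd k Y P n φ g hP hΔ (r + 1) hr b]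
  have := probEq_pi_pair (fun i => margSeqT k Y P n φ g i)
    (fun i => marg_sum_one k Y P n φ g hP hΔ i)
    (fun ys => msgRec Y n φ (extendTup k Y n ys) r) (⟨r + 1, hr⟩ : Fin (k + 1))
    (fun ys v => msgF_update k Y n φ r ⟨r + 1, hr⟩ (Nat.lt_succ_self r) ys v) a b
  exact this

lemma part1_ind (hP : IsPMF P) (hΔ : 0 < DeltaCM k Y P n φ g) :
    ∀ m, m < k + 1 →
      KL2div (phatCM k Y P n φ g)
        (fun ω => msgRec Y n φ (extendTup k Y n ω.1) m)
        (fun ω => msgRec Y n φ (extendTup k Y n ω.2) m)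
      ≤ ∑ r ∈ Finset.range m, miOf (ptildeCM k Y P n φ g)
          (fun ys => msgRec Y n φ (extendTup k Y n ys) r)
          (fun ys => extendTup k Y n ys (r + 1)) := by
  intro m
  induction m with
  | zero =>
    intro h0k
    rw [Finset.range_zero, Finset.sum_empty]
    refine le_of_eq (kl2_eq_zero_of_law _ _ _ fun a => ?_)
    have := probEq_comp_congr_law (phatCM k Y P n φ g)
      (fun ω => extendTup k Y n ω.1 0) (fun ω => extendTup k Y n ω.2 0)
      (fun z => by
        rw [probEq_extfst k Y P n φ g hP hΔ 0 (Nat.succ_pos k) z,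
          probEq_extsnd k Y P n φ g hP hΔ 0 (Nat.succ_pos k) z])
      (fun sq => φ 0 sq 0) a
    exact this
  | succ r ih =>
    intro h
    have hrk : r < k + 1 := Nat.lt_of_succ_lt h
    have hdpi : KL2div (phatCM k Y P n φ g)
        (fun ω => msgRec Y n φ (extendTup k Y n ω.1) (r + 1))
        (fun ω => msgRec Y n φ (extendTup k Y n ω.2) (r + 1))
        ≤ KL2div (phatCM k Y P n φ g)
          (fun ω => (msgRec Y n φ (extendTup k Y n ω.1) r, extendTup k Y n ω.1 (r + 1)))
          (fun ω => (msgRec Y n φ (extendTup k Y n ω.2) r, extendTup k Y n ω.2 (r + 1))) := by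
      have hd := kl2_dpi (phatCM k Y P n φ g) (phat_nonneg k Y P n φ g hP hΔ)
        (phat_sum k Y P n φ g hP hΔ)
        (fun ω => (msgRec Y n φ (extendTup k Y n ω.1) r, extendTup k Y n ω.1 (r + 1)))
        (fun ω => (msgRec Y n φ (extendTup k Y n ω.2) r, extendTup k Y n ω.2 (r + 1)))
        (fun x => φ (r + 1) x.2 x.1)
        (fun ω hω => habs_snd k Y P n φ g hP hΔ
          (fun ys => (msgRec Y n φ (extendTup k Y n ys) r, extendTup k Y n ys (r + 1))) ω hω)
      exact hd
    have hpair : KL2div (phatCM k Y P n φ g)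
        (fun ω => (msgRec Y n φ (extendTup k Y n ω.1) r, extendTup k Y n ω.1 (r + 1)))
        (fun ω => (msgRec Y n φ (extendTup k Y n ω.2) r, extendTup k Y n ω.2 (r + 1)))
        = miOf (phatCM k Y P n φ g) (fun ω => msgRec Y n φ (extendTup k Y n ω.1) r)
            (fun ω => extendTup k Y n ω.1 (r + 1))
          + KL2div (phatCM k Y P n φ g) (fun ω => msgRec Y n φ (extendTup k Y n ω.1) r)
              (fun ω => msgRec Y n φ (extendTup k Y n ω.2) r) :=
      kl2_pair (phatCM k Y P n φ g) (phat_nonneg k Y P n φ g hP hΔ)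
        (fun ω => msgRec Y n φ (extendTup k Y n ω.1) r)
        (fun ω => extendTup k Y n ω.1 (r + 1))
        (fun ω => msgRec Y n φ (extendTup k Y n ω.2) r)
        (fun ω => extendTup k Y n ω.2 (r + 1))
        (fun a b => hind_lemma k Y P n φ g hP hΔ r h a b)
        (fun b => by
          rw [probEq_extsnd k Y P n φ g hP hΔ (r + 1) h b,
            probEq_extfst k Y P n φ g hP hΔ (r + 1) h b])
        (fun ω hω => habs_snd k Y P n φ g hP hΔ
          (fun ys => msgRec Y n φ (extendTup k Y n ys) r) ω hω)
    have hmi : miOf (phatCM k Y P n φ g) (fun ω => msgRec Y n φ (extendTup k Y n ω.1) r)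
        (fun ω => extendTup k Y n ω.1 (r + 1))
        = miOf (ptildeCM k Y P n φ g) (fun ys => msgRec Y n φ (extendTup k Y n ys) r)
          (fun ys => extendTup k Y n ys (r + 1)) :=
      mi_fst (ptildeCM k Y P n φ g) (pmargCM k Y P n φ g) (pmarg_sum k Y P n φ g hP hΔ)
        (fun ys => msgRec Y n φ (extendTup k Y n ys) r)
        (fun ys => extendTup k Y n ys (r + 1))
    rw [Finset.sum_range_succ]
    have hih := ih hrk
    rw [hmi] at hpair
    linarith

lemma part1_main (hP : IsPMF P) (hΔ : 0 < DeltaCM k Y P n φ g) (hk : 0 < k) :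
    klJointCM k Y P n φ g ≤ ∑ r ∈ Finset.range k, miOf (ptildeCM k Y P n φ g)
      (fun ys => msgRec Y n φ (extendTup k Y n ys) r)
      (fun ys => extendTup k Y n ys (r + 1)) := by
  obtain ⟨k', rfl⟩ : ∃ k'', k = k'' + 1 := ⟨k - 1, (Nat.succ_pred_eq_of_pos hk).symm⟩
  have hlast : (k' + 1 : ℕ) < k' + 1 + 1 := Nat.lt_succ_self _
  -- pointwise value of the product-side probability
  have h4 : ∀ c : ℕ × (Fin n → Y (k' + 1)),
      probEq (phatCM (k' + 1) Y P n φ g)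
        (fun ω => (msgRec Y n φ (extendTup (k' + 1) Y n ω.2) k',
          extendTup (k' + 1) Y n ω.2 (k' + 1))) c
      = QmsgCM (k' + 1) Y P n φ g c.1
        * margSeqT (k' + 1) Y P n φ g (Fin.last (k' + 1)) c.2 := by
    rintro ⟨mm, s⟩
    rw [hind_lemma (k' + 1) Y P n φ g hP hΔ k' hlast mm s,
      probEq_Gmsg (k' + 1) Y P n φ g hΔ k' mm]
    have hq : probEq (pmargCM (k' + 1) Y P n φ g)
        (fun ys => msgRec Y n φ (extendTup (k' + 1) Y n ys) k') mm
        = QmsgCM (k' + 1) Y P n φ g mm :=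
      probEq_pmarg_msg (k' + 1) Y P n φ g hP hΔ (Nat.succ_pos k') mm
    rw [hq, probEq_extsnd (k' + 1) Y P n φ g hP hΔ (k' + 1) hlast s]
    rfl
  have h3 : ∀ c : ℕ × (Fin n → Y (k' + 1)),
      probEq (phatCM (k' + 1) Y P n φ g)
        (fun ω => (msgRec Y n φ (extendTup (k' + 1) Y n ω.1) k',
          extendTup (k' + 1) Y n ω.1 (k' + 1))) c
      = probEq (ptildeCM (k' + 1) Y P n φ g)
        (fun ys => (msgRec Y n φ (extendTup (k' + 1) Y n ys) k',
          extendTup (k' + 1) Y n ys (k' + 1))) c :=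
    fun c => probEq_fst (ptildeCM (k' + 1) Y P n φ g) (pmargCM (k' + 1) Y P n φ g)
      (pmarg_sum (k' + 1) Y P n φ g hP hΔ)
      (fun ys => (msgRec Y n φ (extendTup (k' + 1) Y n ys) k',
        extendTup (k' + 1) Y n ys (k' + 1))) c
  have hklq : klJointCM (k' + 1) Y P n φ g
      = KL2div (phatCM (k' + 1) Y P n φ g)
        (fun ω => (msgRec Y n φ (extendTup (k' + 1) Y n ω.1) k',
          extendTup (k' + 1) Y n ω.1 (k' + 1)))
        (fun ω => (msgRec Y n φ (extendTup (k' + 1) Y n ω.2) k',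
          extendTup (k' + 1) Y n ω.2 (k' + 1))) := by
    have h2 : KL2div (phatCM (k' + 1) Y P n φ g)
        (fun ω => (msgRec Y n φ (extendTup (k' + 1) Y n ω.1) k',
          extendTup (k' + 1) Y n ω.1 (k' + 1)))
        (fun ω => (msgRec Y n φ (extendTup (k' + 1) Y n ω.2) k',
          extendTup (k' + 1) Y n ω.2 (k' + 1)))
        = ∑ ys, ptildeCM (k' + 1) Y P n φ g ys * Real.logb 2
            (probEq (phatCM (k' + 1) Y P n φ g)
              (fun ω => (msgRec Y n φ (extendTup (k' + 1) Y n ω.1) k',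
                extendTup (k' + 1) Y n ω.1 (k' + 1)))
              (msgRec Y n φ (extendTup (k' + 1) Y n ys) k',
                extendTup (k' + 1) Y n ys (k' + 1))
            / probEq (phatCM (k' + 1) Y P n φ g)
              (fun ω => (msgRec Y n φ (extendTup (k' + 1) Y n ω.2) k',
                extendTup (k' + 1) Y n ω.2 (k' + 1)))
              (msgRec Y n φ (extendTup (k' + 1) Y n ys) k',
                extendTup (k' + 1) Y n ys (k' + 1))) := by
      unfold KL2div
      exact sum_fst (ptildeCM (k' + 1) Y P n φ g) (pmargCM (k' + 1) Y P n φ g)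
        (pmarg_sum (k' + 1) Y P n φ g hP hΔ)
        (fun a => Real.logb 2
          (probEq (phatCM (k' + 1) Y P n φ g)
            (fun ω => (msgRec Y n φ (extendTup (k' + 1) Y n ω.1) k',
              extendTup (k' + 1) Y n ω.1 (k' + 1)))
            (msgRec Y n φ (extendTup (k' + 1) Y n a) k',
              extendTup (k' + 1) Y n a (k' + 1))
          / probEq (phatCM (k' + 1) Y P n φ g)
            (fun ω => (msgRec Y n φ (extendTup (k' + 1) Y n ω.2) k',
              extendTup (k' + 1) Y n ω.2 (k' + 1)))
            (msgRec Y n φ (extendTup (k' + 1) Y n a) k',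
              extendTup (k' + 1) Y n a (k' + 1))))
    rw [h2]
    unfold klJointCM
    refine Finset.sum_congr rfl fun ys _ => ?_
    rw [h3 (msgRec Y n φ (extendTup (k' + 1) Y n ys) k',
        extendTup (k' + 1) Y n ys (k' + 1)),
      h4 (msgRec Y n φ (extendTup (k' + 1) Y n ys) k',
        extendTup (k' + 1) Y n ys (k' + 1))]
    rfl
  have hpair : KL2div (phatCM (k' + 1) Y P n φ g)
      (fun ω => (msgRec Y n φ (extendTup (k' + 1) Y n ω.1) k',
        extendTup (k' + 1) Y n ω.1 (k' + 1)))
      (fun ω => (msgRec Y n φ (extendTup (k' + 1) Y n ω.2) k',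
        extendTup (k' + 1) Y n ω.2 (k' + 1)))
      = miOf (phatCM (k' + 1) Y P n φ g)
          (fun ω => msgRec Y n φ (extendTup (k' + 1) Y n ω.1) k')
          (fun ω => extendTup (k' + 1) Y n ω.1 (k' + 1))
        + KL2div (phatCM (k' + 1) Y P n φ g)
            (fun ω => msgRec Y n φ (extendTup (k' + 1) Y n ω.1) k')
            (fun ω => msgRec Y n φ (extendTup (k' + 1) Y n ω.2) k') :=
    kl2_pair (phatCM (k' + 1) Y P n φ g) (phat_nonneg (k' + 1) Y P n φ g hP hΔ)
      (fun ω => msgRec Y n φ (extendTup (k' + 1) Y n ω.1) k')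
      (fun ω => extendTup (k' + 1) Y n ω.1 (k' + 1))
      (fun ω => msgRec Y n φ (extendTup (k' + 1) Y n ω.2) k')
      (fun ω => extendTup (k' + 1) Y n ω.2 (k' + 1))
      (fun a b => hind_lemma (k' + 1) Y P n φ g hP hΔ k' hlast a b)
      (fun b => by
        rw [probEq_extsnd (k' + 1) Y P n φ g hP hΔ (k' + 1) hlast b,
          probEq_extfst (k' + 1) Y P n φ g hP hΔ (k' + 1) hlast b])
      (fun ω hω => habs_snd (k' + 1) Y P n φ g hP hΔ
        (fun ys => msgRec Y n φ (extendTup (k' + 1) Y n ys) k') ω hω)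
  have hmi : miOf (phatCM (k' + 1) Y P n φ g)
      (fun ω => msgRec Y n φ (extendTup (k' + 1) Y n ω.1) k')
      (fun ω => extendTup (k' + 1) Y n ω.1 (k' + 1))
      = miOf (ptildeCM (k' + 1) Y P n φ g)
        (fun ys => msgRec Y n φ (extendTup (k' + 1) Y n ys) k')
        (fun ys => extendTup (k' + 1) Y n ys (k' + 1)) :=
    mi_fst (ptildeCM (k' + 1) Y P n φ g) (pmargCM (k' + 1) Y P n φ g)
      (pmarg_sum (k' + 1) Y P n φ g hP hΔ)
      (fun ys => msgRec Y n φ (extendTup (k' + 1) Y n ys) k')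
      (fun ys => extendTup (k' + 1) Y n ys (k' + 1))
  have hih := part1_ind (k' + 1) Y P n φ g hP hΔ k' (Nat.lt_succ_of_lt (Nat.lt_succ_self k'))
  rw [Finset.sum_range_succ]
  rw [hmi] at hpair
  rw [hklq, hpair]
  linarith

end Main5

/-- divergence single-letterization chain:
`D(P_{M̃_k Ỹ_kⁿ} ‖ Q_{M̃_k} × P_{Ỹ_kⁿ}) ≤ ∑_{ℓ=1}^{k} I(M̃_ℓ; Ỹ_ℓⁿ) ≤ n·∑_{ℓ=1}^{k} I(U_ℓ; Ỹ_ℓ)`,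
where `U_ℓ := (M̃_ℓ, Ỹ₀^{T−1},…,Ỹ_k^{T−1}, T)` and `Ỹ_ℓ := Ỹ_{ℓ,T}` (here `ℓ = j+1`). -/
theorem khop_divergence_single_letterization
    (k : ℕ) (Y : ℕ → Type) [∀ i, Fintype (Y i)] [∀ i, Nonempty (Y i)]
    (hk : 1 ≤ k)
    (P : (∀ i : Fin (k + 1), Y i) → ℝ) (hP : IsPMF P) (hMC : IsMarkovChainK k Y P)
    (φ : ∀ n : ℕ, ∀ ℓ : ℕ, (Fin n → Y ℓ) → ℕ → ℕ)
    (g : ∀ n : ℕ, (Fin n → Y k) → ℕ → Bool) :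
    ∀ n : ℕ, 0 < DeltaCM k Y P n (φ n) (g n) →
      klJointCM k Y P n (φ n) (g n)
          ≤ ∑ j : Fin k,
              miOf (pfullCM k Y P n (φ n) (g n))
                (fun ω => MtilRV k Y n (φ n) (j : ℕ) ω)
                (fun ω => ω.1 (idxHi k j)) ∧
      (∑ j : Fin k,
          miOf (pfullCM k Y P n (φ n) (g n))
            (fun ω => MtilRV k Y n (φ n) (j : ℕ) ω)
            (fun ω => ω.1 (idxHi k j)))
        ≤ n * ∑ j : Fin k,
            miOf (pfullCM k Y P n (φ n) (g n))
              (UvarCM k Y n (φ n) (j : ℕ))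
              (fun ω => ω.1 (idxHi k j) ω.2) := by
  intro n hΔ
  have hn := n_pos k Y P n (φ n) (g n) hP hΔ
  have h2 : ∑ j : Fin k, miOf (pfullCM k Y P n (φ n) (g n))
        (fun ω => MtilRV k Y n (φ n) (j : ℕ) ω) (fun ω => ω.1 (idxHi k j))
      = ∑ r ∈ Finset.range k, miOf (ptildeCM k Y P n (φ n) (g n))
          (fun ys => msgRec Y n (φ n) (extendTup k Y n ys) r)
          (fun ys => extendTup k Y n ys (r + 1)) := by
    rw [← Fin.sum_univ_eq_sum_range (fun m => miOf (ptildeCM k Y P n (φ n) (g n))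
      (fun ys => msgRec Y n (φ n) (extendTup k Y n ys) m)
      (fun ys => extendTup k Y n ys (m + 1))) k]
    refine Finset.sum_congr rfl fun j _ => ?_
    show miOf (pfullCM k Y P n (φ n) (g n))
        (fun ω => MtilRV k Y n (φ n) (j : ℕ) ω) (fun ω => ω.1 (idxHi k j))
      = miOf (ptildeCM k Y P n (φ n) (g n))
          (fun ys => msgRec Y n (φ n) (extendTup k Y n ys) (j : ℕ))
          (fun ys => extendTup k Y n ys ((j : ℕ) + 1))
    have e1 : miOf (pfullCM k Y P n (φ n) (g n))
        (fun ω => MtilRV k Y n (φ n) (j : ℕ) ω) (fun ω => ω.1 (idxHi k j))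
        = miOf (ptildeCM k Y P n (φ n) (g n))
          (fun ys => msgRec Y n (φ n) (extendTup k Y n ys) (j : ℕ))
          (fun ys => ys (idxHi k j)) := by
      have hpf : pfullCM k Y P n (φ n) (g n)
          = fun ω : (∀ i : Fin (k + 1), Fin n → Y i) × Fin n =>
              ptildeCM k Y P n (φ n) (g n) ω.1 * (n : ℝ)⁻¹ :=
        funext fun ω => div_eq_mul_inv _ _
      rw [hpf]
      exact mi_fst (ptildeCM k Y P n (φ n) (g n)) (fun _ : Fin n => (n : ℝ)⁻¹)
        (sum_uniform_one hn)
        (fun ys => msgRec Y n (φ n) (extendTup k Y n ys) (j : ℕ))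
        (fun ys => ys (idxHi k j))
    have e2 : (fun ys : ∀ i : Fin (k + 1), Fin n → Y i =>
          extendTup k Y n ys ((j : ℕ) + 1))
        = fun ys => ys (idxHi k j) :=
      funext fun ys => extendTup_lt k Y n ys ((j : ℕ) + 1) (Nat.succ_lt_succ j.isLt)
    rw [e2]
    exact e1
  constructor
  · have h1 := part1_main k Y P n (φ n) (g n) hP hΔ hk
    rw [h2]
    exact h1
  · calc ∑ j : Fin k, miOf (pfullCM k Y P n (φ n) (g n))
          (fun ω => MtilRV k Y n (φ n) (j : ℕ) ω) (fun ω => ω.1 (idxHi k j))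
        ≤ ∑ j : Fin k, (n : ℝ) * miOf (pfullCM k Y P n (φ n) (g n))
            (UvarCM k Y n (φ n) (j : ℕ)) (fun ω => ω.1 (idxHi k j) ω.2) :=
          Finset.sum_le_sum fun j _ => part2_term k Y P n (φ n) (g n) hP hΔ j
      _ = n * ∑ j : Fin k, miOf (pfullCM k Y P n (φ n) (g n))
            (UvarCM k Y n (φ n) (j : ℕ)) (fun ω => ω.1 (idxHi k j) ω.2) :=
          (Finset.mul_sum _ _ _).symm
end
end

section
/- Let Z, W, V be random variables on finite alphabets, let P be a pmf on their product alphabet under which Z → W → V forms a Markov chain (Z and V are conditionally independent given W), and let P̃ be any pmf on the same product alphabet whose support is contained in the support of P. Then the conditional mutual information computed under P̃ satisfies I_{P̃}(Z;V|W) ≤ D(P̃ ‖ P). -/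
open Filter

noncomputable section

/-- KL divergence (base 2) between two pmfs on a finite alphabet. -/
def klDiv2 {α : Type*} [Fintype α] (p q : α → ℝ) : ℝ :=
  ∑ a, p a * Real.logb 2 (p a / q a)

lemma sum_ite_const' {α : Type*} [Fintype α] (c : Prop) [Decidable c] (f : α → ℝ) :
    ∑ a, (if c then f a else 0) = if c then ∑ a, f a else 0 := by
  split <;> simp

open Classical in
lemma probEq_ZW {Z W V : Type*} [Fintype Z] [Fintype W] [Fintype V] (Pt : Z × W × V → ℝ)
    (z : Z) (w : W) : probEq Pt (fun x => (x.1, x.2.1)) (z, w) = ∑ v, Pt (z, w, v) := by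
  have h : probEq Pt (fun x => (x.1, x.2.1)) (z, w)
      = ∑ x : Z, ∑ y : W, ∑ v : V, if (x, y) = (z, w) then Pt (x, y, v) else 0 := by
    rw [probEq]; simp only [Fintype.sum_prod_type]
    refine Finset.sum_congr rfl fun x _ => Finset.sum_congr rfl fun y _ =>
      Finset.sum_congr rfl fun u _ => ?_
    congr
  rw [h]
  simp [Prod.mk.injEq, ite_and, sum_ite_const', Finset.sum_ite_eq']

open Classical in
lemma probEq_VW {Z W V : Type*} [Fintype Z] [Fintype W] [Fintype V] (Pt : Z × W × V → ℝ)
    (v : V) (w : W) : probEq Pt (fun x => (x.2.2, x.2.1)) (v, w) = ∑ z, Pt (z, w, v) := by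
  have h : probEq Pt (fun x => (x.2.2, x.2.1)) (v, w)
      = ∑ x : Z, ∑ y : W, ∑ u : V, if (u, y) = (v, w) then Pt (x, y, u) else 0 := by
    rw [probEq]; simp only [Fintype.sum_prod_type]
    refine Finset.sum_congr rfl fun x _ => Finset.sum_congr rfl fun y _ =>
      Finset.sum_congr rfl fun u _ => ?_
    congr
  rw [h]
  simp [Prod.mk.injEq, ite_and, sum_ite_const', Finset.sum_ite_eq']

open Classical in
lemma probEq_W {Z W V : Type*} [Fintype Z] [Fintype W] [Fintype V] (Pt : Z × W × V → ℝ)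
    (w : W) : probEq Pt (fun x => x.2.1) w = ∑ z, ∑ v, Pt (z, w, v) := by
  have h : probEq Pt (fun x => x.2.1) w
      = ∑ x : Z, ∑ y : W, ∑ u : V, if y = w then Pt (x, y, u) else 0 := by
    rw [probEq]; simp only [Fintype.sum_prod_type]
  rw [h]
  simp [sum_ite_const', Finset.sum_ite_eq']

open Classical in
lemma probEq_ZVW {Z W V : Type*} [Fintype Z] [Fintype W] [Fintype V] (Pt : Z × W × V → ℝ)
    (z : Z) (w : W) (v : V) :
    probEq Pt (fun x => ((x.1, x.2.2), x.2.1)) ((z, v), w) = Pt (z, w, v) := by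
  have h : probEq Pt (fun x => ((x.1, x.2.2), x.2.1)) ((z, v), w)
      = ∑ x : Z, ∑ y : W, ∑ u : V, if ((x, u), y) = ((z, v), w) then Pt (x, y, u) else 0 := by
    rw [probEq]; simp only [Fintype.sum_prod_type]
    refine Finset.sum_congr rfl fun x _ => Finset.sum_congr rfl fun y _ =>
      Finset.sum_congr rfl fun u _ => ?_
    congr
  rw [h]
  simp [Prod.mk.injEq, ite_and, sum_ite_const', Finset.sum_ite_eq']

/-- Gibbs' inequality on a finite alphabet. -/
lemma gibbs_aux {α : Type*} [Fintype α] (p q : α → ℝ)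
    (hp : ∀ a, 0 ≤ p a) (hq : ∀ a, 0 ≤ q a)
    (hsupp : ∀ a, q a = 0 → p a = 0)
    (hsum : ∑ a, q a ≤ ∑ a, p a) :
    0 ≤ ∑ a, p a * Real.logb 2 (p a / q a) := by
  have hlog2 : (0:ℝ) < Real.log 2 := Real.log_pos (by norm_num)
  have key : ∀ a, (p a - q a) / Real.log 2 ≤ p a * Real.logb 2 (p a / q a) := by
    intro a
    rcases eq_or_lt_of_le (hp a) with h0 | h0
    · rw [← h0]
      simp only [zero_sub, zero_mul]
      exact div_nonpos_of_nonpos_of_nonneg (by linarith [hq a]) hlog2.le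
    · have hq0 : 0 < q a := by
        rcases eq_or_lt_of_le (hq a) with h | h
        · exact absurd (hsupp a h.symm) (by linarith)
        · exact h
      have h1 : Real.log (q a / p a) ≤ q a / p a - 1 :=
        Real.log_le_sub_one_of_pos (by positivity)
      have h2 : Real.log (p a / q a) = - Real.log (q a / p a) := by
        rw [← Real.log_inv]
        congr 1
        field_simp
      have h3 : p a * (q a / p a) = q a := by field_simp
      have h4 : p a - q a ≤ p a * (-Real.log (q a / p a)) := by nlinarith
      rw [Real.logb, h2, ← mul_div_assoc]
      exact (div_le_div_iff_of_pos_right hlog2).mpr h4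
  calc (0:ℝ) ≤ ((∑ a, p a) - (∑ a, q a)) / Real.log 2 :=
        div_nonneg (by linarith) hlog2.le
    _ = ∑ a, (p a - q a) / Real.log 2 := by
        rw [← Finset.sum_sub_distrib, Finset.sum_div]
    _ ≤ ∑ a, p a * Real.logb 2 (p a / q a) :=
        Finset.sum_le_sum fun a _ => key a

lemma sum_prod3 {Z W V : Type*} [Fintype Z] [Fintype W] [Fintype V] (f : Z × W × V → ℝ) :
    ∑ ω : Z × W × V, f ω = ∑ z, ∑ w, ∑ v, f (z, w, v) := by
  rw [Fintype.sum_prod_type]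
  simp only [Fintype.sum_prod_type]


/-- If `Z → W → V` is a Markov chain under `P` (i.e. `Z` and `V` are
conditionally independent given `W`), and `P̃` is any pmf on the same product alphabet
whose support is contained in the support of `P`, then
`I_{P̃}(Z;V|W) ≤ D(P̃ ‖ P)`. -/
theorem condMI_le_klDiv_of_markov
    {Z W V : Type*} [Fintype Z] [Fintype W] [Fintype V]
    (P Pt : Z × W × V → ℝ) (hP : IsPMF P) (hPt : IsPMF Pt)
    (hMarkov : ∀ z w v, P (z, w, v) * (∑ z', ∑ v', P (z', w, v'))
        = (∑ v', P (z, w, v')) * (∑ z', P (z', w, v)))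
    (hsupp : ∀ x, P x = 0 → Pt x = 0) :
    condMIOf Pt (fun x => x.1) (fun x => x.2.2) (fun x => x.2.1) ≤ klDiv2 Pt P := by
  obtain ⟨hPt0, hPt1⟩ := hPt
  obtain ⟨hP0, hP1⟩ := hP
  -- Step 1 : write the conditional mutual information as a single sum
  have hMI : condMIOf Pt (fun x => x.1) (fun x => x.2.2) (fun x => x.2.1)
      = ∑ ω : Z × W × V,
          (Pt ω * Real.logb 2 (∑ z', ∑ v', Pt (z', ω.2.1, v'))
            + Pt ω * Real.logb 2 (Pt ω)
            - Pt ω * Real.logb 2 (∑ v', Pt (ω.1, ω.2.1, v'))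
            - Pt ω * Real.logb 2 (∑ z', Pt (z', ω.2.1, ω.2.2))) := by
    simp only [condMIOf, condEntOf, entOf, probEq_ZW, probEq_VW, probEq_W, probEq_ZVW,
      Prod.mk.eta]
    rw [Finset.sum_sub_distrib, Finset.sum_sub_distrib, Finset.sum_add_distrib]
    ring
  -- Step 2 : key pointwise identity using the Markov property
  have key : ∀ ω : Z × W × V,
      Pt ω * Real.logb 2 (Pt ω / P ω)
        - (Pt ω * Real.logb 2 (∑ z', ∑ v', Pt (z', ω.2.1, v'))
            + Pt ω * Real.logb 2 (Pt ω)
            - Pt ω * Real.logb 2 (∑ v', Pt (ω.1, ω.2.1, v'))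
            - Pt ω * Real.logb 2 (∑ z', Pt (z', ω.2.1, ω.2.2)))
      = Pt ω * Real.logb 2 ((∑ v', Pt (ω.1, ω.2.1, v')) / (∑ v', P (ω.1, ω.2.1, v')))
        + (Pt ω * Real.logb 2 ((∑ z', Pt (z', ω.2.1, ω.2.2)) / (∑ z', P (z', ω.2.1, ω.2.2)))
            - Pt ω * Real.logb 2
                ((∑ z', ∑ v', Pt (z', ω.2.1, v')) / (∑ z', ∑ v', P (z', ω.2.1, v')))) := by
    intro ω
    rcases eq_or_lt_of_le (hPt0 ω) with h0 | h0
    · rw [← h0]; ring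
    · -- positivity of everything in sight
      have hPω : 0 < P ω := by
        rcases eq_or_lt_of_le (hP0 ω) with h | h
        · exact absurd (hsupp ω h.symm) (by linarith)
        · exact h
      have hPtω : Pt (ω.1, ω.2.1, ω.2.2) = Pt ω := rfl
      have hPω' : P (ω.1, ω.2.1, ω.2.2) = P ω := rfl
      have hSZW : 0 < ∑ v', Pt (ω.1, ω.2.1, v') := by
        have := Finset.single_le_sum (f := fun v' => Pt (ω.1, ω.2.1, v'))
          (fun i _ => hPt0 _) (Finset.mem_univ ω.2.2)
        simp only [Prod.mk.eta] at this; linarith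
      have hSWV : 0 < ∑ z', Pt (z', ω.2.1, ω.2.2) := by
        have := Finset.single_le_sum (f := fun z' => Pt (z', ω.2.1, ω.2.2))
          (fun i _ => hPt0 _) (Finset.mem_univ ω.1)
        simp only [Prod.mk.eta] at this; linarith
      have hSW : 0 < ∑ z', ∑ v', Pt (z', ω.2.1, v') := by
        have h1 := Finset.single_le_sum (f := fun z' => ∑ v', Pt (z', ω.2.1, v'))
          (fun i _ => Finset.sum_nonneg fun j _ => hPt0 _) (Finset.mem_univ ω.1)
        linarith
      have hTZW : 0 < ∑ v', P (ω.1, ω.2.1, v') := by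
        have := Finset.single_le_sum (f := fun v' => P (ω.1, ω.2.1, v'))
          (fun i _ => hP0 _) (Finset.mem_univ ω.2.2)
        simp only [Prod.mk.eta] at this; linarith
      have hTWV : 0 < ∑ z', P (z', ω.2.1, ω.2.2) := by
        have := Finset.single_le_sum (f := fun z' => P (z', ω.2.1, ω.2.2))
          (fun i _ => hP0 _) (Finset.mem_univ ω.1)
        simp only [Prod.mk.eta] at this; linarith
      have hTW : 0 < ∑ z', ∑ v', P (z', ω.2.1, v') := by
        have h1 := Finset.single_le_sum (f := fun z' => ∑ v', P (z', ω.2.1, v'))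
          (fun i _ => Finset.sum_nonneg fun j _ => hP0 _) (Finset.mem_univ ω.1)
        linarith
      -- Markov property in log form
      have hM := hMarkov ω.1 ω.2.1 ω.2.2
      rw [hPω'] at hM
      have hlogM : Real.logb 2 (P ω) + Real.logb 2 (∑ z', ∑ v', P (z', ω.2.1, v'))
          = Real.logb 2 (∑ v', P (ω.1, ω.2.1, v'))
            + Real.logb 2 (∑ z', P (z', ω.2.1, ω.2.2)) := by
        rw [← Real.logb_mul (ne_of_gt hPω) (ne_of_gt hTW),
            ← Real.logb_mul (ne_of_gt hTZW) (ne_of_gt hTWV), hM]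
      rw [Real.logb_div (ne_of_gt h0) (ne_of_gt hPω),
          Real.logb_div (ne_of_gt hSZW) (ne_of_gt hTZW),
          Real.logb_div (ne_of_gt hSWV) (ne_of_gt hTWV),
          Real.logb_div (ne_of_gt hSW) (ne_of_gt hTW)]
      nlinarith [hlogM]
  -- Step 3 : the difference is the sum of two nonnegative terms
  have hdiff : klDiv2 Pt P - condMIOf Pt (fun x => x.1) (fun x => x.2.2) (fun x => x.2.1)
      = (∑ ω : Z × W × V,
            Pt ω * Real.logb 2 ((∑ v', Pt (ω.1, ω.2.1, v')) / (∑ v', P (ω.1, ω.2.1, v'))))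
        + ∑ ω : Z × W × V,
            (Pt ω * Real.logb 2
                ((∑ z', Pt (z', ω.2.1, ω.2.2)) / (∑ z', P (z', ω.2.1, ω.2.2)))
              - Pt ω * Real.logb 2
                  ((∑ z', ∑ v', Pt (z', ω.2.1, v')) / (∑ z', ∑ v', P (z', ω.2.1, v')))) := by
    rw [klDiv2, hMI, ← Finset.sum_sub_distrib, ← Finset.sum_add_distrib]
    exact Finset.sum_congr rfl fun ω _ => key ω
  -- Step 4 : first term is nonnegative (Gibbs on the (Z,W)-marginals)
  have h1 : 0 ≤ ∑ ω : Z × W × V,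
      Pt ω * Real.logb 2 ((∑ v', Pt (ω.1, ω.2.1, v')) / (∑ v', P (ω.1, ω.2.1, v'))) := by
    have hg := gibbs_aux (α := Z × W)
      (fun zw => ∑ v, Pt (zw.1, zw.2, v)) (fun zw => ∑ v, P (zw.1, zw.2, v))
      (fun zw => Finset.sum_nonneg fun v _ => hPt0 _)
      (fun zw => Finset.sum_nonneg fun v _ => hP0 _)
      (fun zw hq0 => by
        apply Finset.sum_eq_zero
        intro v _
        apply hsupp
        exact (Finset.sum_eq_zero_iff_of_nonneg (fun i _ => hP0 _)).mp hq0 v (Finset.mem_univ v))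
      (by
        have e1 : ∑ zw : Z × W, ∑ v, P (zw.1, zw.2, v) = ∑ a : Z × W × V, P a := by
          rw [Fintype.sum_prod_type, sum_prod3]
        have e2 : ∑ zw : Z × W, ∑ v, Pt (zw.1, zw.2, v) = ∑ a : Z × W × V, Pt a := by
          rw [Fintype.sum_prod_type, sum_prod3]
        rw [e1, e2, hP1, hPt1])
    rw [Fintype.sum_prod_type] at hg
    calc (0:ℝ) ≤ ∑ z, ∑ w, (∑ v, Pt (z, w, v))
          * Real.logb 2 ((∑ v, Pt (z, w, v)) / (∑ v, P (z, w, v))) := hg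
      _ = ∑ ω : Z × W × V,
            Pt ω * Real.logb 2 ((∑ v', Pt (ω.1, ω.2.1, v')) / (∑ v', P (ω.1, ω.2.1, v'))) := by
          rw [sum_prod3 (f := fun ω : Z × W × V =>
            Pt ω * Real.logb 2 ((∑ v', Pt (ω.1, ω.2.1, v')) / (∑ v', P (ω.1, ω.2.1, v'))))]
          refine Finset.sum_congr rfl fun z _ => Finset.sum_congr rfl fun w _ => ?_
          rw [Finset.sum_mul]
  -- Step 5 : second term is nonnegative (conditional Gibbs, one `w` at a time)
  have h2 : 0 ≤ ∑ ω : Z × W × V,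
      (Pt ω * Real.logb 2 ((∑ z', Pt (z', ω.2.1, ω.2.2)) / (∑ z', P (z', ω.2.1, ω.2.2)))
        - Pt ω * Real.logb 2
            ((∑ z', ∑ v', Pt (z', ω.2.1, v')) / (∑ z', ∑ v', P (z', ω.2.1, v')))) := by
    rw [sum_prod3 (f := fun ω : Z × W × V =>
      (Pt ω * Real.logb 2 ((∑ z', Pt (z', ω.2.1, ω.2.2)) / (∑ z', P (z', ω.2.1, ω.2.2)))
        - Pt ω * Real.logb 2
            ((∑ z', ∑ v', Pt (z', ω.2.1, v')) / (∑ z', ∑ v', P (z', ω.2.1, v')))))]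
    rw [Finset.sum_comm]
    apply Finset.sum_nonneg
    intro w _
    -- for this fixed w
    set A3 : ℝ := ∑ z', ∑ v', Pt (z', w, v') with hA3
    set B3 : ℝ := ∑ z', ∑ v', P (z', w, v') with hB3
    have hA3nn : 0 ≤ A3 := Finset.sum_nonneg fun i _ => Finset.sum_nonneg fun j _ => hPt0 _
    have hB3nn : 0 ≤ B3 := Finset.sum_nonneg fun i _ => Finset.sum_nonneg fun j _ => hP0 _
    have transform : ∑ z, ∑ v,
        (Pt (z, w, v) * Real.logb 2 ((∑ z', Pt (z', w, v)) / (∑ z', P (z', w, v)))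
          - Pt (z, w, v) * Real.logb 2 (A3 / B3))
        = ∑ v, (∑ z, Pt (z, w, v))
            * (Real.logb 2 ((∑ z', Pt (z', w, v)) / (∑ z', P (z', w, v)))
                - Real.logb 2 (A3 / B3)) := by
      rw [Finset.sum_comm]
      refine Finset.sum_congr rfl fun v _ => ?_
      rw [Finset.sum_mul]
      refine Finset.sum_congr rfl fun z _ => by ring
    rw [transform]
    -- apply Gibbs on V with the twisted reference measure
    have hg := gibbs_aux (α := V)
      (fun v => ∑ z, Pt (z, w, v))
      (fun v => (∑ z, P (z, w, v)) * A3 / B3)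
      (fun v => Finset.sum_nonneg fun z _ => hPt0 _)
      (fun v => div_nonneg (mul_nonneg (Finset.sum_nonneg fun z _ => hP0 _) hA3nn) hB3nn)
      ?hsuppV ?hsumV
    · calc (0:ℝ) ≤ ∑ v, (∑ z, Pt (z, w, v))
            * Real.logb 2 ((∑ z, Pt (z, w, v)) / ((∑ z, P (z, w, v)) * A3 / B3)) := hg
        _ = ∑ v, (∑ z, Pt (z, w, v))
            * (Real.logb 2 ((∑ z', Pt (z', w, v)) / (∑ z', P (z', w, v)))
                - Real.logb 2 (A3 / B3)) := by
          refine Finset.sum_congr rfl fun v _ => ?_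
          rcases eq_or_lt_of_le (Finset.sum_nonneg fun z (_ : z ∈ Finset.univ) => hPt0 (z, w, v))
            with h0 | h0
          · rw [← h0]; ring
          · -- positivity again
            have hB2 : 0 < ∑ z, P (z, w, v) := by
              rcases eq_or_lt_of_le (Finset.sum_nonneg fun z (_ : z ∈ Finset.univ) =>
                hP0 (z, w, v)) with h | h
              · exfalso
                have : ∑ z, Pt (z, w, v) = 0 := Finset.sum_eq_zero fun z _ => hsupp _
                  ((Finset.sum_eq_zero_iff_of_nonneg (fun i _ => hP0 _)).mp h.symm z
                    (Finset.mem_univ z))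
                linarith
              · exact h
            have hA3pos : 0 < A3 := by
              have : ∑ z, Pt (z, w, v) ≤ A3 := by
                rw [hA3]
                exact Finset.sum_le_sum fun z _ =>
                  Finset.single_le_sum (f := fun v' => Pt (z, w, v'))
                    (fun i _ => hPt0 _) (Finset.mem_univ v)
              linarith
            have hB3pos : 0 < B3 := by
              have : ∑ z, P (z, w, v) ≤ B3 := by
                rw [hB3]
                exact Finset.sum_le_sum fun z _ =>
                  Finset.single_le_sum (f := fun v' => P (z, w, v'))
                    (fun i _ => hP0 _) (Finset.mem_univ v)
              linarith
            have hB2' : (∑ z, P (z, w, v)) ≠ 0 := ne_of_gt hB2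
            have hA3' : A3 ≠ 0 := ne_of_gt hA3pos
            have hB3' : B3 ≠ 0 := ne_of_gt hB3pos
            congr 1
            have e : (∑ z, Pt (z, w, v)) / ((∑ z, P (z, w, v)) * A3 / B3)
                = ((∑ z, Pt (z, w, v)) / (∑ z, P (z, w, v))) / (A3 / B3) := by
              field_simp [hB2', hA3', hB3']
              try ring
            rw [e, Real.logb_div (ne_of_gt (div_pos h0 hB2)) (ne_of_gt (div_pos hA3pos hB3pos))]
    case hsuppV =>
      intro v hq0
      rcases eq_or_lt_of_le hB3nn with hB30 | hB30
      · -- B3 = 0 forces everything to vanish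
        apply Finset.sum_eq_zero
        intro z _
        apply hsupp
        have hz : ∑ v', P (z, w, v') = 0 :=
          (Finset.sum_eq_zero_iff_of_nonneg (fun i _ =>
            Finset.sum_nonneg fun j _ => hP0 _)).mp hB30.symm z (Finset.mem_univ z)
        exact (Finset.sum_eq_zero_iff_of_nonneg (fun i _ => hP0 _)).mp hz v (Finset.mem_univ v)
      · have hq0' : (∑ z, P (z, w, v)) * A3 / B3 = 0 := hq0
        have hprod : (∑ z, P (z, w, v)) * A3 = 0 := by
          rcases div_eq_zero_iff.mp hq0' with h | h
          · exact h
          · exact absurd h (ne_of_gt hB30)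
        rcases mul_eq_zero.mp hprod with h | h
        · apply Finset.sum_eq_zero
          intro z _
          exact hsupp _ ((Finset.sum_eq_zero_iff_of_nonneg (fun i _ => hP0 _)).mp h z
            (Finset.mem_univ z))
        · -- A3 = 0
          have hle : ∑ z, Pt (z, w, v) ≤ A3 := by
            rw [hA3]
            exact Finset.sum_le_sum fun z _ =>
              Finset.single_le_sum (f := fun v' => Pt (z, w, v'))
                (fun i _ => hPt0 _) (Finset.mem_univ v)
          have hge : 0 ≤ ∑ z, Pt (z, w, v) := Finset.sum_nonneg fun z _ => hPt0 _
          rw [h] at hle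
          linarith
    case hsumV =>
      show ∑ v, (∑ z, P (z, w, v)) * A3 / B3 ≤ ∑ v, ∑ z, Pt (z, w, v)
      have hAsum : ∑ v, ∑ z, Pt (z, w, v) = A3 := by
        rw [hA3]; exact Finset.sum_comm
      have hBsum : ∑ v, ∑ z, P (z, w, v) = B3 := by
        rw [hB3]; exact Finset.sum_comm
      have hq : ∑ v, (∑ z, P (z, w, v)) * A3 / B3 = B3 * A3 / B3 := by
        rw [← Finset.sum_div, ← Finset.sum_mul, hBsum]
      have hfin : B3 * A3 / B3 ≤ A3 := by
        rcases eq_or_lt_of_le hB3nn with h | h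
        · rw [← h]; simp [hA3nn]
        · rw [mul_comm, mul_div_assoc, div_self (ne_of_gt h), mul_one]
      rw [hq, hAsum]
      exact hfin
  linarith [hdiff, h1, h2]
end
end
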